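/- arXiv:2008.03819 — 8 statements merged into one kernel-verified Lean document; each statement's English description precedes it below -/
import Mathlib

section
/- Let C be a pointed, spanning polyhedral cone in E = ℝⁿ and let σ be a face of C. Then σ° + C = ⋃_{σ'} σ'°, where the union runs over all faces σ' of C with σ ⊆ σ'; that is, the Minkowski sum of the relative interior of σ with C equals the union of the relative interiors of the faces of C containing σ. -/
open Pointwise

/-- A polyhedral cone in `ℝⁿ`: an intersection of finitely many closed linear half-spaces. -/
def IsPolyCone {n : ℕ} (C : Set (Fin n → ℝ)) : Prop :=
  ∃ (m : ℕ) (ℓ : Fin m → ((Fin n → ℝ) →ₗ[ℝ] ℝ)), C = {x | ∀ i, 0 ≤ ℓ i x}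

/-- A face of a cone `C`: a subset of `C` containing `0`, closed under addition, and such
that whenever `x, y ∈ C` and `x + y` lies in the subset, both `x` and `y` do. -/
def IsConeFace {M : Type*} [AddCommMonoid M] (σ C : Set M) : Prop :=
  σ ⊆ C ∧ (0 : M) ∈ σ ∧ (∀ x ∈ σ, ∀ y ∈ σ, x + y ∈ σ) ∧
    ∀ x ∈ C, ∀ y ∈ C, x + y ∈ σ → x ∈ σ ∧ y ∈ σ

/-- A downset for the partial order `x ≼ y ↔ y - x ∈ C`. -/
def IsDownset {n : ℕ} (C D : Set (Fin n → ℝ)) : Prop :=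
  ∀ x y : Fin n → ℝ, y ∈ D → y - x ∈ C → x ∈ D

/-- The upper boundary downset `D^σ = {a | a - σ° ⊆ D}`. -/
def upSet {n : ℕ} (D σ : Set (Fin n → ℝ)) : Set (Fin n → ℝ) :=
  {a | ∀ s ∈ intrinsicInterior ℝ σ, a - s ∈ D}

/-- `a` is a cogenerator of the downset `D` along the face `τ` with nadir `σ`:
`(a + C) ∩ D^σ = a + τ` and no face `σ''` with `τ ⊆ σ'' ⊊ σ` satisfies `a - σ''° ⊆ D`. -/
def IsCogen {n : ℕ} (C D τ σ : Set (Fin n → ℝ)) (a : Fin n → ℝ) : Prop :=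
  (({a} + C) ∩ upSet D σ = {a} + τ) ∧
  ∀ σ'' : Set (Fin n → ℝ), IsConeFace σ'' C → τ ⊆ σ'' → σ'' ⊂ σ →
    ¬ (∀ s ∈ intrinsicInterior ℝ σ'', a - s ∈ D)

/-- A `σ`-vicinity of a point `p` of `E ⧸ span τ`: the image under the quotient map of
`u + σ° + C` for some `u` admitting a representative `w` of `p` with `w - u ∈ σ°`. -/
def IsVic {n : ℕ} (C σ τ : Set (Fin n → ℝ))
    (p : (Fin n → ℝ) ⧸ Submodule.span ℝ τ)
    (V : Set ((Fin n → ℝ) ⧸ Submodule.span ℝ τ)) : Prop :=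
  ∃ u w : Fin n → ℝ, (Submodule.span ℝ τ).mkQ w = p ∧
    w - u ∈ intrinsicInterior ℝ σ ∧
    V = (Submodule.span ℝ τ).mkQ '' ({u} + intrinsicInterior ℝ σ + C)

lemma face_nsmul {M : Type*} [AddCommMonoid M] {σ C : Set M} (h : IsConeFace σ C)
    {s : M} (hs : s ∈ σ) (k : ℕ) : k • s ∈ σ := by
  induction k with
  | zero => simpa using h.2.1
  | succ k ih => rw [succ_nsmul]; exact h.2.2.1 _ ih _ hs

lemma face_witness {n m : ℕ} (ℓ : Fin m → ((Fin n → ℝ) →ₗ[ℝ] ℝ)) {σ : Set (Fin n → ℝ)}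
    (hσ : IsConeFace σ {x | ∀ i, 0 ≤ ℓ i x}) :
    ∃ s ∈ σ, (∀ i, ℓ i s = 0 → ∀ y ∈ σ, ℓ i y = 0) ∧
      σ = {x | (∀ i, 0 ≤ ℓ i x) ∧ ∀ i, ℓ i s = 0 → ℓ i x = 0} := by
  classical
  obtain ⟨hsub, h0, hadd, habs⟩ := hσ
  set y : Fin m → (Fin n → ℝ) := fun i => if h : ∃ z ∈ σ, ℓ i z ≠ 0 then h.choose else 0 with hy
  have hyσ : ∀ i, y i ∈ σ := by
    intro i
    simp only [hy]
    split
    · next h => exact h.choose_spec.1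
    · exact h0
  set s : Fin n → ℝ := ∑ i, y i with hs_def
  have hsσ : s ∈ σ :=
    Finset.sum_induction y (· ∈ σ) (fun a b ha hb => hadd a ha b hb) h0 (fun i _ => hyσ i)
  have hpos : ∀ i j, 0 ≤ ℓ i (y j) := fun i j => hsub (hyσ j) i
  have hℓs : ∀ i, ℓ i s = ∑ j, ℓ i (y j) := fun i => by rw [hs_def, map_sum]
  have hkey : ∀ i, ℓ i s = 0 → ∀ z ∈ σ, ℓ i z = 0 := by
    intro i hi z hz
    by_contra hne
    have hex : ∃ z ∈ σ, ℓ i z ≠ 0 := ⟨z, hz, hne⟩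
    have h1 : ℓ i (y i) ≠ 0 := by
      simp only [hy]
      rw [dif_pos hex]
      exact hex.choose_spec.2
    have h2 : ℓ i (y i) ≤ ℓ i s := by
      rw [hℓs i]
      exact Finset.single_le_sum (fun j _ => hpos i j) (Finset.mem_univ i)
    have h3 : 0 < ℓ i (y i) := lt_of_le_of_ne (hpos i i) (Ne.symm h1)
    linarith [hi ▸ h2]
  refine ⟨s, hsσ, hkey, ?_⟩
  ext z
  constructor
  · exact fun hz => ⟨hsub hz, fun i hi => hkey i hi z hz⟩
  · rintro ⟨hz1, hz2⟩
    set B : ℝ := ∑ i, (if ℓ i s = 0 then 0 else ℓ i z / ℓ i s) with hB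
    set N : ℕ := ⌈B⌉₊ with hN
    have hterm : ∀ i, ℓ i s ≠ 0 → ℓ i z ≤ (N : ℝ) * ℓ i s := by
      intro i hi
      have hsi : 0 < ℓ i s := lt_of_le_of_ne (hsub hsσ i) (Ne.symm hi)
      have hBi : (if ℓ i s = 0 then 0 else ℓ i z / ℓ i s) ≤ B := by
        rw [hB]
        refine Finset.single_le_sum (f := fun j => if ℓ j s = 0 then 0 else ℓ j z / ℓ j s)
          (fun j _ => ?_) (Finset.mem_univ i)
        split
        · exact le_rfl
        · exact div_nonneg (hz1 j) (hsub hsσ j)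
      rw [if_neg hi] at hBi
      have : ℓ i z / ℓ i s ≤ (N : ℝ) := hBi.trans (Nat.le_ceil B)
      calc ℓ i z = (ℓ i z / ℓ i s) * ℓ i s := by field_simp
        _ ≤ (N : ℝ) * ℓ i s := by nlinarith
    have hNs : N • s ∈ σ := face_nsmul ⟨hsub, h0, hadd, habs⟩ hsσ N
    have hℓN : ∀ i, ℓ i (N • s) = (N : ℝ) * ℓ i s := by
      intro i; rw [map_nsmul, nsmul_eq_mul]
    have hdiff : (N • s - z) ∈ {x | ∀ i, 0 ≤ ℓ i x} := by
      intro i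
      by_cases hi : ℓ i s = 0
      · rw [map_sub, hℓN i, hi, hz2 i hi]; norm_num
      · have := hterm i hi
        simp only [map_sub, hℓN]
        linarith
    have hsum : z + (N • s - z) = N • s := by abel
    exact (habs z hz1 _ hdiff (by rw [hsum]; exact hNs)).1

lemma relint_face {n m : ℕ} (ℓ : Fin m → ((Fin n → ℝ) →ₗ[ℝ] ℝ)) {σ : Set (Fin n → ℝ)}
    {s : Fin n → ℝ} (hs : s ∈ σ)
    (hkey : ∀ i, ℓ i s = 0 → ∀ y ∈ σ, ℓ i y = 0)
    (hrep : σ = {x | (∀ i, 0 ≤ ℓ i x) ∧ ∀ i, ℓ i s = 0 → ℓ i x = 0}) :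
    intrinsicInterior ℝ σ =
      {x | (∀ i, ℓ i s = 0 → ℓ i x = 0) ∧ ∀ i, ℓ i s ≠ 0 → 0 < ℓ i x} := by
  have hcont : ∀ i, Continuous (ℓ i) := fun i => (ℓ i).continuous_of_finiteDimensional
  have hsC : ∀ i, 0 ≤ ℓ i s := by rw [hrep] at hs; exact hs.1
  ext x
  constructor
  · intro hx
    have hxσ : x ∈ σ := intrinsicInterior_subset hx
    have hxmem := hxσ
    rw [hrep] at hxmem
    refine ⟨fun i hi => hxmem.2 i hi, fun i hi => ?_⟩
    rcases lt_or_eq_of_le (hxmem.1 i) with h | h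
    · exact h
    exfalso
    have hsi : 0 < ℓ i s := lt_of_le_of_ne (hsC i) (Ne.symm hi)
    obtain ⟨x', hx'int, rfl⟩ := mem_intrinsicInterior.mp hx
    set g : ℝ → (affineSpan ℝ σ) := fun t =>
      ⟨AffineMap.lineMap ((x' : Fin n → ℝ)) s t,
        AffineMap.lineMap_mem t x'.2 (subset_affineSpan ℝ σ hs)⟩ with hg
    have hgc : Continuous g :=
      Continuous.subtype_mk (AffineMap.lineMap_continuous) _
    have hU : IsOpen (g ⁻¹' interior (((↑) : affineSpan ℝ σ → _) ⁻¹' σ)) :=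
      isOpen_interior.preimage hgc
    have h0U : (0 : ℝ) ∈ g ⁻¹' interior (((↑) : affineSpan ℝ σ → _) ⁻¹' σ) := by
      have : g 0 = x' := Subtype.ext (by simp [hg])
      simpa [Set.mem_preimage, this] using hx'int
    obtain ⟨δ, hδ, hball⟩ := Metric.isOpen_iff.mp hU 0 h0U
    have htball : -(δ/2) ∈ Metric.ball (0:ℝ) δ := by
      simp only [Metric.mem_ball, Real.dist_eq, sub_zero, abs_neg]
      rw [abs_of_pos (by linarith)]
      linarith
    have hmem0 : g (-(δ/2)) ∈ interior (((↑) : affineSpan ℝ σ → _) ⁻¹' σ) := hball htball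
    have hmem1 := interior_subset hmem0
    have hmem : AffineMap.lineMap ((x' : Fin n → ℝ)) s (-(δ/2)) ∈ σ := hmem1
    have hval : ℓ i (AffineMap.lineMap ((x' : Fin n → ℝ)) s (-(δ/2))) = -(δ/2) * ℓ i s := by
      simp only [AffineMap.lineMap_apply, vsub_eq_sub, vadd_eq_add, map_add, map_smul,
        map_sub, smul_eq_mul]
      rw [← h]
      ring
    have hCnn : ∀ z ∈ σ, 0 ≤ ℓ i z := fun z hz => by rw [hrep] at hz; exact hz.1 i
    have := hCnn _ hmem
    rw [hval] at this
    nlinarith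
  · rintro ⟨hvan, hpos⟩
    have hxσ : x ∈ σ := by
      rw [hrep]
      refine ⟨fun i => ?_, hvan⟩
      by_cases hi : ℓ i s = 0
      · exact le_of_eq (hvan i hi).symm
      · exact (hpos i hi).le
    have hspanK : ∀ z ∈ affineSpan ℝ σ, ∀ i, ℓ i s = 0 → ℓ i z = 0 := by
      have hσK : σ ⊆ (⨅ i ∈ {i | ℓ i s = 0}, LinearMap.ker (ℓ i)).toAffineSubspace := by
        intro z hz
        simp only [SetLike.mem_coe, Submodule.mem_toAffineSubspace, Submodule.mem_iInf,
          LinearMap.mem_ker, Set.mem_setOf_eq]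
        exact fun i hi => hkey i hi z hz
      intro z hz i hi
      have := affineSpan_le.mpr hσK hz
      simp only [SetLike.mem_coe, Submodule.mem_toAffineSubspace, Submodule.mem_iInf,
        LinearMap.mem_ker, Set.mem_setOf_eq] at this
      exact this i hi
    refine mem_intrinsicInterior.mpr ⟨⟨x, subset_affineSpan ℝ σ hxσ⟩, ?_, rfl⟩
    rw [mem_interior]
    refine ⟨((↑) : affineSpan ℝ σ → _) ⁻¹' {y | ∀ i, ℓ i s ≠ 0 → 0 < ℓ i y}, ?_, ?_, ?_⟩
    · rintro ⟨z, hzspan⟩ hz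
      simp only [Set.mem_preimage, Set.mem_setOf_eq] at hz ⊢
      show z ∈ σ
      rw [hrep]
      refine ⟨fun i => ?_, fun i hi => hspanK z hzspan i hi⟩
      by_cases hi : ℓ i s = 0
      · exact le_of_eq (hspanK z hzspan i hi).symm
      · exact (hz i hi).le
    · refine IsOpen.preimage continuous_subtype_val ?_
      have : {y : Fin n → ℝ | ∀ i, ℓ i s ≠ 0 → 0 < ℓ i y} =
          ⋂ i, {y | ℓ i s ≠ 0 → 0 < ℓ i y} := by
        ext y; simp [Set.mem_iInter]
      rw [this]
      refine isOpen_iInter_of_finite fun i => ?_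
      by_cases hi : ℓ i s = 0
      · convert isOpen_univ
        ext y; simp [hi]
      · have : {y : Fin n → ℝ | ℓ i s ≠ 0 → 0 < ℓ i y} = (ℓ i) ⁻¹' Set.Ioi 0 := by
          ext y; simp [hi]
        rw [this]
        exact isOpen_Ioi.preimage (hcont i)
    · exact fun i hi => hpos i hi

/-- `σ° + C` equals the union of the relative interiors of the faces
of `C` containing `σ`. -/
theorem face_relint_add_cone {n : ℕ} (C σ : Set (Fin n → ℝ))
    (hC : IsPolyCone C) (hpointed : C ∩ (-C) = {0}) (hspan : C - C = Set.univ)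
    (hσ : IsConeFace σ C) :
    intrinsicInterior ℝ σ + C =
      ⋃ σ' ∈ {σ' : Set (Fin n → ℝ) | IsConeFace σ' C ∧ σ ⊆ σ'},
        intrinsicInterior ℝ σ' := by
  classical
  obtain ⟨m, ℓ, rfl⟩ := hC
  obtain ⟨s, hsσ, hkey, hrep⟩ := face_witness ℓ hσ
  have hdesc := relint_face ℓ hsσ hkey hrep
  have hsC : ∀ i, 0 ≤ ℓ i s := hσ.1 hsσ
  ext x
  simp only [Set.mem_iUnion, Set.mem_setOf_eq, exists_prop]
  constructor
  · intro hx
    obtain ⟨a, ha, b, hb, rfl⟩ := Set.mem_add.mp hx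
    rw [hdesc] at ha
    have hbC : ∀ i, 0 ≤ ℓ i b := hb
    have haC : ∀ i, 0 ≤ ℓ i a := fun i => by
      by_cases hi : ℓ i s = 0
      · exact le_of_eq (ha.1 i hi).symm
      · exact (ha.2 i hi).le
    have habC : ∀ i, 0 ≤ ℓ i (a + b) := fun i => by
      rw [map_add]; exact add_nonneg (haC i) (hbC i)
    set σ' : Set (Fin n → ℝ) :=
      {z | (∀ i, 0 ≤ ℓ i z) ∧ ∀ i, ℓ i (a + b) = 0 → ℓ i z = 0} with hσ'def
    have hface' : IsConeFace σ' {x | ∀ i, 0 ≤ ℓ i x} := by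
      refine ⟨fun z hz => hz.1, ⟨fun i => by simp, fun i _ => by simp⟩,
        fun u hu v hv => ⟨fun i => ?_, fun i hi => ?_⟩, fun u hu v hv huv => ?_⟩
      · rw [map_add]; exact add_nonneg (hu.1 i) (hv.1 i)
      · rw [map_add, hu.2 i hi, hv.2 i hi, add_zero]
      · have h1 : ∀ i, ℓ i (a + b) = 0 → ℓ i u = 0 ∧ ℓ i v = 0 := by
          intro i hi
          have h2 := huv.2 i hi
          rw [map_add] at h2
          constructor <;> [linarith [hu i, hv i]; linarith [hu i, hv i]]
        exact ⟨⟨hu, fun i hi => (h1 i hi).1⟩, ⟨hv, fun i hi => (h1 i hi).2⟩⟩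
    have hσσ' : σ ⊆ σ' := by
      intro z hz
      have hzmem := hz
      rw [hrep] at hzmem
      refine ⟨hzmem.1, fun i hi => ?_⟩
      rw [map_add] at hi
      have h0a : ℓ i a = 0 := by linarith [haC i, hbC i]
      have hsi : ℓ i s = 0 := by
        by_contra hne
        exact absurd h0a (ne_of_gt (ha.2 i hne))
      exact hkey i hsi z hz
    have habσ' : (a + b) ∈ σ' := ⟨habC, fun i hi => hi⟩
    have hkey' : ∀ i, ℓ i (a + b) = 0 → ∀ y ∈ σ', ℓ i y = 0 := fun i hi y hy => hy.2 i hi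
    have hdesc' := relint_face ℓ habσ' hkey' rfl
    refine ⟨σ', ⟨hface', hσσ'⟩, ?_⟩
    rw [hdesc']
    exact ⟨fun i hi => hi, fun i hi => lt_of_le_of_ne (habC i) (Ne.symm hi)⟩
  · rintro ⟨σ', ⟨hface', hσσ'⟩, hx⟩
    obtain ⟨s', hs'σ', hkey', hrep'⟩ := face_witness ℓ hface'
    have hdesc' := relint_face ℓ hs'σ' hkey' hrep'
    rw [hdesc'] at hx
    have hxC : ∀ i, 0 ≤ ℓ i x := fun i => by
      by_cases hi : ℓ i s' = 0
      · exact le_of_eq (hx.1 i hi).symm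
      · exact (hx.2 i hi).le
    have hkeypos : ∀ i, ℓ i s ≠ 0 → 0 < ℓ i x := by
      intro i hi
      have hi' : ℓ i s' ≠ 0 := fun h => hi (hkey' i h s (hσσ' hsσ))
      exact hx.2 i hi'
    set F : Finset (Fin m) := Finset.univ.filter (fun i => ℓ i s ≠ 0) with hF
    set G : Finset ℝ := insert 1 (F.image (fun i => ℓ i x / ℓ i s)) with hG
    have hGne : G.Nonempty := ⟨1, Finset.mem_insert_self _ _⟩
    set ε : ℝ := G.min' hGne with hε
    have hεpos : 0 < ε := by
      have hmem : ε ∈ G := G.min'_mem hGne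
      rw [hG] at hmem
      rcases Finset.mem_insert.mp hmem with h | h
      · rw [h]; norm_num
      · obtain ⟨i, hiF, hieq⟩ := Finset.mem_image.mp h
        have hi : ℓ i s ≠ 0 := (Finset.mem_filter.mp hiF).2
        rw [← hieq]
        exact div_pos (hkeypos i hi) (lt_of_le_of_ne (hsC i) (Ne.symm hi))
    have hεle : ∀ i, ℓ i s ≠ 0 → ε * ℓ i s ≤ ℓ i x := by
      intro i hi
      have hmemG : ℓ i x / ℓ i s ∈ G :=
        Finset.mem_insert_of_mem
          (Finset.mem_image_of_mem _ (Finset.mem_filter.mpr ⟨Finset.mem_univ i, hi⟩))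
      have hle := G.min'_le _ hmemG
      have hsi : 0 < ℓ i s := lt_of_le_of_ne (hsC i) (Ne.symm hi)
      calc ε * ℓ i s ≤ (ℓ i x / ℓ i s) * ℓ i s := by nlinarith
        _ = ℓ i x := by field_simp
    refine Set.mem_add.mpr ⟨ε • s, ?_, x - ε • s, ?_, by abel⟩
    · rw [hdesc]
      refine ⟨fun i hi => ?_, fun i hi => ?_⟩
      · rw [map_smul, smul_eq_mul, hi, mul_zero]
      · rw [map_smul, smul_eq_mul]
        exact mul_pos hεpos (lt_of_le_of_ne (hsC i) (Ne.symm hi))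
    · intro i
      rw [map_sub, map_smul, smul_eq_mul]
      by_cases hi : ℓ i s = 0
      · rw [hi, mul_zero, sub_zero]; exact hxC i
      · linarith [hεle i hi]
end

section
/- Let C be a pointed, spanning polyhedral cone in E = ℝⁿ, let σ be a face of C, let a ∈ E, and let (a_k) be a sequence in E converging to a. Then ⋃_k (a_k − C) ⊇ a − interior(C), where interior(C) is the topological interior of C. If moreover a_k ∈ a − σ° for every k, then ⋃_k (a_k − C) = a − (σ° + C). -/
open Pointwise

open Filter Topology in
lemma ri_nbhd_aux {n : ℕ} (σ : Set (Fin n → ℝ)) {s : Fin n → ℝ}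
    (hs : s ∈ intrinsicInterior ℝ σ) :
    ∃ ε > 0, ∀ y ∈ affineSpan ℝ σ, dist y s < ε → y ∈ σ := by
  obtain ⟨s', hs', rfl⟩ := hs
  rw [mem_interior_iff_mem_nhds, nhds_subtype_eq_comap, Filter.mem_comap] at hs'
  obtain ⟨V, hV, hVsub⟩ := hs'
  obtain ⟨ε, hε, hball⟩ := Metric.mem_nhds_iff.mp hV
  exact ⟨ε, hε, fun y hy hd => hVsub (a := ⟨y, hy⟩) (hball hd)⟩

/-- If `a_k → a` then `⋃_k (a_k - C) ⊇ a - interior C`; and if moreover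
`a_k ∈ a - σ°` for all `k`, then `⋃_k (a_k - C) = a - (σ° + C)`. -/
theorem union_translates_of_tendsto {n : ℕ} (C σ : Set (Fin n → ℝ))
    (hC : IsPolyCone C) (hpointed : C ∩ (-C) = {0}) (hspan : C - C = Set.univ)
    (hσ : IsConeFace σ C) (a : Fin n → ℝ) (aseq : ℕ → Fin n → ℝ)
    (hconv : Filter.Tendsto aseq Filter.atTop (nhds a)) :
    ({a} - interior C ⊆ ⋃ k, ({aseq k} - C)) ∧
    ((∀ k, aseq k ∈ ({a} : Set (Fin n → ℝ)) - intrinsicInterior ℝ σ) →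
      (⋃ k, ({aseq k} - C)) = {a} - (intrinsicInterior ℝ σ + C)) := by
  obtain ⟨m, ℓ, hCdef⟩ := hC
  have hCadd : ∀ x ∈ C, ∀ y ∈ C, x + y ∈ C := by
    subst hCdef; intro x hx y hy i; simpa using add_nonneg (hx i) (hy i)
  constructor
  · intro x hx
    rw [Set.mem_sub] at hx
    obtain ⟨p, hp, c, hc, rfl⟩ := hx
    obtain rfl : a = p := hp.symm
    obtain ⟨ε, hε, hball⟩ := Metric.isOpen_iff.mp isOpen_interior c hc
    obtain ⟨k, hk⟩ := ((Metric.tendsto_nhds.mp hconv) ε hε).exists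
    refine Set.mem_iUnion.mpr ⟨k, ?_⟩
    rw [Set.mem_sub]
    refine ⟨aseq k, rfl, aseq k - (a - c), ?_, by abel⟩
    refine interior_subset (hball ?_)
    have h1 : aseq k - (a - c) - c = aseq k - a := by abel
    rw [Metric.mem_ball, dist_eq_norm, h1, ← dist_eq_norm]
    exact hk
  · intro hmem
    have hex : ∀ k, ∃ s ∈ intrinsicInterior ℝ σ, a - s = aseq k := by
      intro k
      obtain ⟨p, hp, q, hq, hpq⟩ := Set.mem_sub.mp (hmem k)
      obtain rfl : a = p := hp.symm
      exact ⟨q, hq, hpq⟩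
    choose s hsmem hseq using hex
    ext x
    simp only [Set.mem_iUnion]
    constructor
    · rintro ⟨k, hk⟩
      obtain ⟨p, hp, c, hc, rfl⟩ := Set.mem_sub.mp hk
      obtain rfl : aseq k = p := hp.symm
      rw [Set.mem_sub]
      refine ⟨a, rfl, s k + c, Set.add_mem_add (hsmem k) hc, ?_⟩
      rw [← hseq k]; abel
    · intro hx
      obtain ⟨p, hp, q, hq, rfl⟩ := Set.mem_sub.mp hx
      obtain rfl : a = p := hp.symm
      obtain ⟨t, ht, c, hc, rfl⟩ := Set.mem_add.mp hq
      obtain ⟨ε, hε, hball⟩ := ri_nbhd_aux σ ht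
      have hs0 : Filter.Tendsto (fun k => s k) Filter.atTop (nhds 0) := by
        have := hconv.const_sub a
        simp only [sub_self] at this
        refine this.congr fun k => ?_
        rw [← hseq k]; abel
      obtain ⟨k, hk⟩ := (Metric.tendsto_nhds.mp hs0 ε hε).exists
      refine ⟨k, Set.mem_sub.mpr ⟨aseq k, rfl, (t - s k) + c, ?_, ?_⟩⟩
      · refine hCadd _ (hσ.1 ?_) _ hc
        have hspan' : t - s k ∈ affineSpan ℝ σ := by
          have h0 : (0 : Fin n → ℝ) ∈ affineSpan ℝ σ := subset_affineSpan ℝ σ hσ.2.1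
          have hsk : s k ∈ affineSpan ℝ σ :=
            subset_affineSpan ℝ σ (intrinsicInterior_subset (hsmem k))
          have htA : t ∈ affineSpan ℝ σ :=
            subset_affineSpan ℝ σ (intrinsicInterior_subset ht)
          have h2 : t - s k = (1 : ℝ) • ((0 : Fin n → ℝ) -ᵥ s k) +ᵥ t := by
            show t - s k = (1 : ℝ) • ((0 : Fin n → ℝ) - s k) + t
            rw [one_smul]; abel
          rw [h2]
          exact AffineSubspace.smul_vsub_vadd_mem (affineSpan ℝ σ) (1 : ℝ) h0 hsk htA
        refine hball _ hspan' ?_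
        rw [dist_eq_norm]
        have : t - s k - t = -(s k) := by abel
        rw [this, norm_neg, ← dist_zero_right]
        exact hk
      · rw [← hseq k]; abel
end

section
/- Let C be a pointed, spanning polyhedral cone in E = ℝⁿ and let D ⊆ E be a downset for the order induced by C. Then a point a ∈ E lies in the topological closure of D if and only if D contains a − interior(C), i.e., a − v ∈ D for every v in the topological interior of C. -/
open Pointwise

/-- A point lies in the closure of a downset `D` iff `D` contains the
translate `a - interior C` of the interior of the negative cone. -/
theorem mem_closure_downset_iff {n : ℕ} (C D : Set (Fin n → ℝ))
    (hC : IsPolyCone C) (hpointed : C ∩ (-C) = {0}) (hspan : C - C = Set.univ)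
    (hD : IsDownset C D) (a : Fin n → ℝ) :
    a ∈ closure D ↔ ∀ v ∈ interior C, a - v ∈ D := by
  obtain ⟨m, ℓ, rfl⟩ := hC
  set C : Set (Fin n → ℝ) := {x | ∀ i, 0 ≤ ℓ i x} with hCdef
  have hconv : Convex ℝ C := by
    have : C = ⋂ i, {x | 0 ≤ ℓ i x} := by ext x; simp [hCdef]
    rw [this]
    exact convex_iInter fun i => convex_halfSpace_ge (ℓ i).isLinear 0
  have h0 : (0 : Fin n → ℝ) ∈ C := fun i => by simp
  constructor
  · intro ha v hv
    rw [mem_interior_iff_mem_nhds, Metric.mem_nhds_iff] at hv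
    obtain ⟨ε, hε, hball⟩ := hv
    rw [Metric.mem_closure_iff] at ha
    obtain ⟨d, hd, hdist⟩ := ha (ε) hε
    refine hD (a - v) d hd ?_
    have : d - (a - v) ∈ Metric.ball v ε := by
      rw [Metric.mem_ball]
      have : d - (a - v) - v = d - a := by abel
      rw [dist_eq_norm, this, ← dist_eq_norm, dist_comm]
      exact hdist
    exact hball this
  · intro h
    -- interior of C is nonempty
    have hvspan : vectorSpan ℝ C = ⊤ := by
      rw [vectorSpan_def]
      have hvs : C -ᵥ C = Set.univ := hspan
      rw [hvs, Submodule.span_univ]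
    have haff : affineSpan ℝ C = ⊤ :=
      (AffineSubspace.affineSpan_eq_top_iff_vectorSpan_eq_top_of_nonempty ℝ (Fin n → ℝ) (Fin n → ℝ) ⟨0, h0⟩).2 hvspan
    have hint : (interior C).Nonempty :=
      hconv.interior_nonempty_iff_affineSpan_eq_top.2 haff
    obtain ⟨v₀, hv₀⟩ := hint
    have key : ∀ t : ℝ, 0 < t → t ≤ 1 → t • v₀ ∈ interior C := by
      intro t ht ht1
      have h1t : (0:ℝ) ≤ 1 - t := by linarith
      have := hconv.combo_interior_closure_mem_interior hv₀
        (subset_closure h0) ht h1t (by ring)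
      simpa using this
    rw [Metric.mem_closure_iff]
    intro ε hε
    set t : ℝ := min 1 (ε / (‖v₀‖ + 1)) with htdef
    have hnorm : (0:ℝ) < ‖v₀‖ + 1 := by positivity
    have ht : 0 < t := lt_min one_pos (by positivity)
    have ht1 : t ≤ 1 := min_le_left _ _
    refine ⟨a - t • v₀, h _ (key t ht ht1), ?_⟩
    have : dist a (a - t • v₀) = t * ‖v₀‖ := by
      rw [dist_eq_norm]
      have : a - (a - t • v₀) = t • v₀ := by abel
      rw [this, norm_smul, Real.norm_eq_abs, abs_of_pos ht]
    rw [this]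
    calc t * ‖v₀‖ ≤ (ε / (‖v₀‖ + 1)) * ‖v₀‖ := by
          apply mul_le_mul_of_nonneg_right (min_le_right _ _) (norm_nonneg _)
      _ < ε := by
          rw [div_mul_eq_mul_div, div_lt_iff₀ hnorm]
          nlinarith [norm_nonneg v₀]
end

section
/- Let C be a pointed, spanning polyhedral cone in E = ℝⁿ, let D ⊆ E be a downset, and let a lie in the topological closure of D. Define the tangent cone T_a D = {v ∈ −C | ∃ ε₀ > 0 such that a + εv ∈ D for all 0 < ε ≤ ε₀}. Then there exists a set ∇ of faces of C that is closed under passing to larger faces (if σ ∈ ∇ and σ' is a face of C with σ ⊆ σ', then σ' ∈ ∇) such that T_a D = −⋃_{σ ∈ ∇} σ°. -/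
open Pointwise

/-- Key geometric lemma: if `w` is in the intrinsic interior of a set `σ` containing `0`,
and `u ∈ σ`, then `w - δ • u ∈ σ` for some small `δ > 0`. -/
lemma relint_sub_smul {n : ℕ} {σ : Set (Fin n → ℝ)} (h0 : (0 : Fin n → ℝ) ∈ σ)
    {w u : Fin n → ℝ} (hw : w ∈ intrinsicInterior ℝ σ) (hu : u ∈ σ) :
    ∃ δ : ℝ, 0 < δ ∧ w - δ • u ∈ σ := by
  obtain ⟨w', hw', hww⟩ := mem_intrinsicInterior.1 hw
  have hmem : ∀ δ : ℝ, (w'.1 - δ • u) ∈ affineSpan ℝ σ := by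
    intro δ
    have h := AffineSubspace.smul_vsub_vadd_mem (affineSpan ℝ σ) δ
      (subset_affineSpan ℝ σ h0) (subset_affineSpan ℝ σ hu) w'.2
    have : δ • ((0 : Fin n → ℝ) -ᵥ u) +ᵥ w'.1 = w'.1 - δ • u := by
      simp [vsub_eq_sub, vadd_eq_add, smul_sub, sub_eq_add_neg, add_comm]
    rwa [this] at h
  set f : ℝ → affineSpan ℝ σ := fun δ => ⟨w'.1 - δ • u, hmem δ⟩ with hf
  have hfc : Continuous f := by
    apply Continuous.subtype_mk
    exact continuous_const.sub (continuous_id.smul continuous_const)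
  have hopen : IsOpen (f ⁻¹' interior (((↑) : affineSpan ℝ σ → _) ⁻¹' σ)) :=
    isOpen_interior.preimage hfc
  have h0m : (0 : ℝ) ∈ f ⁻¹' interior (((↑) : affineSpan ℝ σ → _) ⁻¹' σ) := by
    have : f 0 = w' := by apply Subtype.ext; simp [hf]
    simpa [Set.mem_preimage, this] using hw'
  obtain ⟨r, hr, hball⟩ := Metric.isOpen_iff.1 hopen 0 h0m
  refine ⟨r / 2, by linarith, ?_⟩
  have : f (r / 2) ∈ interior (((↑) : affineSpan ℝ σ → _) ⁻¹' σ) := by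
    apply hball
    rw [Metric.mem_ball, Real.dist_eq, sub_zero, abs_of_pos (by linarith : (0:ℝ) < r/2)]
    linarith
  have := interior_subset this
  rw [← hww]
  exact this

lemma minFace_isFace {n m : ℕ} (ℓ : Fin m → ((Fin n → ℝ) →ₗ[ℝ] ℝ)) (u : Fin n → ℝ) :
    IsConeFace {x | ∀ i, 0 ≤ ℓ i x ∧ (ℓ i u = 0 → ℓ i x = 0)} {x | ∀ i, 0 ≤ ℓ i x} := by
  refine ⟨fun x hx i => (hx i).1, fun i => by simp, ?_, ?_⟩
  · intro x hx y hy i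
    refine ⟨by have := (hx i).1; have := (hy i).1; simp only [map_add]; linarith, fun h => ?_⟩
    simp only [map_add, (hx i).2 h, (hy i).2 h, add_zero]
  · intro x hx y hy hxy
    constructor <;> intro i <;>
      [refine ⟨hx i, fun h => ?_⟩; refine ⟨hy i, fun h => ?_⟩] <;>
      · have h2 := (hxy i).2 h
        simp only [map_add] at h2
        have := hx i; have := hy i
        linarith

lemma mem_intrinsicInterior_minFace {n m : ℕ} (ℓ : Fin m → ((Fin n → ℝ) →ₗ[ℝ] ℝ))
    {u : Fin n → ℝ} (hu : ∀ i, 0 ≤ ℓ i u) :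
    u ∈ intrinsicInterior ℝ {x | ∀ i, 0 ≤ ℓ i x ∧ (ℓ i u = 0 → ℓ i x = 0)} := by
  set σ : Set (Fin n → ℝ) := {x | ∀ i, 0 ≤ ℓ i x ∧ (ℓ i u = 0 → ℓ i x = 0)} with hσ
  have huσ : u ∈ σ := fun i => ⟨hu i, fun h => h⟩
  have hsubker : ∀ i, ℓ i u = 0 → ∀ x ∈ affineSpan ℝ σ, ℓ i x = 0 := by
    intro i hi x hx
    have hle : affineSpan ℝ σ ≤ (LinearMap.ker (ℓ i)).toAffineSubspace := by
      rw [affineSpan_le]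
      intro y hy
      have : ℓ i y = 0 := (hy i).2 hi
      simpa [Submodule.mem_toAffineSubspace, LinearMap.mem_ker] using this
    have := hle hx
    simpa [Submodule.mem_toAffineSubspace, LinearMap.mem_ker] using this
  set O : Set (affineSpan ℝ σ) := {x | ∀ i, ℓ i u = 0 ∨ 0 < ℓ i ↑x} with hO
  have hOopen : IsOpen O := by
    have hEq : O = ⋂ i, {x : affineSpan ℝ σ | ℓ i u = 0 ∨ 0 < ℓ i ↑x} := by
      ext x; simp [hO, Set.mem_iInter]
    rw [hEq]
    apply isOpen_iInter_of_finite
    intro i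
    by_cases h : ℓ i u = 0
    · have : {x : affineSpan ℝ σ | ℓ i u = 0 ∨ 0 < ℓ i ↑x} = Set.univ := by
        ext x; simp [h]
      rw [this]; exact isOpen_univ
    · have : {x : affineSpan ℝ σ | ℓ i u = 0 ∨ 0 < ℓ i ↑x}
          = (fun x : affineSpan ℝ σ => ℓ i ↑x) ⁻¹' Set.Ioi 0 := by
        ext x; simp [h]
      rw [this]
      exact (((ℓ i).continuous_of_finiteDimensional).comp
        continuous_subtype_val).isOpen_preimage _ isOpen_Ioi
  have hOsub : O ⊆ ((↑) : affineSpan ℝ σ → _) ⁻¹' σ := by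
    intro x hx i
    by_cases h0 : ℓ i u = 0
    · have := hsubker i h0 x.1 x.2
      exact ⟨le_of_eq this.symm, fun _ => this⟩
    · rcases hx i with h | h
      · exact absurd h h0
      · exact ⟨le_of_lt h, fun hc => absurd hc h0⟩
  have humem : (⟨u, subset_affineSpan ℝ σ huσ⟩ : affineSpan ℝ σ)
      ∈ interior (((↑) : affineSpan ℝ σ → _) ⁻¹' σ) := by
    apply interior_maximal hOsub hOopen
    intro i
    by_cases h : ℓ i u = 0
    · exact Or.inl h
    · exact Or.inr (lt_of_le_of_ne (hu i) (Ne.symm h))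
  exact mem_intrinsicInterior.2 ⟨_, humem, rfl⟩


lemma face_smul_mem {n m : ℕ} {ℓ : Fin m → ((Fin n → ℝ) →ₗ[ℝ] ℝ)} {σ : Set (Fin n → ℝ)}
    (hσ : IsConeFace σ {x | ∀ i, 0 ≤ ℓ i x}) {x : Fin n → ℝ} (hx : x ∈ σ)
    {t : ℝ} (ht : 0 ≤ t) (ht1 : t ≤ 1) : t • x ∈ σ := by
  rcases eq_or_lt_of_le ht with h | h
  · rw [← h, zero_smul]; exact hσ.2.1
  · have hxC : x ∈ {x | ∀ i, 0 ≤ ℓ i x} := hσ.1 hx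
    have h1 : t • x ∈ {x | ∀ i, 0 ≤ ℓ i x} := by
      intro i; rw [map_smul, smul_eq_mul]; exact mul_nonneg ht (hxC i)
    have h2 : (1 - t) • x ∈ {x | ∀ i, 0 ≤ ℓ i x} := by
      intro i; rw [map_smul, smul_eq_mul]; exact mul_nonneg (by linarith) (hxC i)
    have h3 : t • x + (1 - t) • x ∈ σ := by
      rw [← add_smul]; norm_num; exact hx
    exact (hσ.2.2.2 _ h1 _ h2 h3).1

lemma face_convex {n m : ℕ} {ℓ : Fin m → ((Fin n → ℝ) →ₗ[ℝ] ℝ)} {σ : Set (Fin n → ℝ)}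
    (hσ : IsConeFace σ {x | ∀ i, 0 ≤ ℓ i x}) : Convex ℝ σ := by
  intro x hx y hy s t hs ht hst
  exact hσ.2.2.1 _ (face_smul_mem hσ hx hs (by linarith)) _
    (face_smul_mem hσ hy ht (by linarith))

/-- The tangent cone of a downset at a point of its closure is the
negative of a union of relative interiors of faces forming a cocomplex. -/
theorem tangentCone_downset_shape {n : ℕ} (C D : Set (Fin n → ℝ))
    (hC : IsPolyCone C) (hpointed : C ∩ (-C) = {0}) (hspan : C - C = Set.univ)
    (hD : IsDownset C D) (a : Fin n → ℝ) (ha : a ∈ closure D) :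
    ∃ nab : Set (Set (Fin n → ℝ)),
      (∀ σ ∈ nab, IsConeFace σ C) ∧
      (∀ σ ∈ nab, ∀ σ' : Set (Fin n → ℝ), IsConeFace σ' C → σ ⊆ σ' → σ' ∈ nab) ∧
      {v : Fin n → ℝ | v ∈ -C ∧ ∃ ε₀ > (0 : ℝ), ∀ ε : ℝ, 0 < ε → ε ≤ ε₀ → a + ε • v ∈ D}
        = -⋃ σ ∈ nab, intrinsicInterior ℝ σ := by
  obtain ⟨m, ℓ, hCeq⟩ := hC
  subst hCeq
  have hCsmul : ∀ t : ℝ, 0 ≤ t → ∀ x ∈ {x : Fin n → ℝ | ∀ i, 0 ≤ ℓ i x},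
      t • x ∈ {x : Fin n → ℝ | ∀ i, 0 ≤ ℓ i x} := by
    intro t ht x hx i
    rw [map_smul, smul_eq_mul]
    exact mul_nonneg ht (hx i)
  set S : Set (Fin n → ℝ) :=
    {u | (∀ i, 0 ≤ ℓ i u) ∧ ∃ ε₀ > (0 : ℝ), ∀ ε : ℝ, 0 < ε → ε ≤ ε₀ → a - ε • u ∈ D}
    with hS
  have hSup : ∀ u ∈ S, ∀ c ∈ {x : Fin n → ℝ | ∀ i, 0 ≤ ℓ i x}, u + c ∈ S := by
    rintro u ⟨huC, ε₀, hε₀, hud⟩ c hc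
    refine ⟨fun i => by rw [map_add]; exact add_nonneg (huC i) (hc i), ε₀, hε₀, ?_⟩
    intro ε h1 h2
    refine hD _ (a - ε • u) (hud ε h1 h2) ?_
    have hxy : a - ε • u - (a - ε • (u + c)) = ε • c := by
      rw [smul_add]; abel
    rw [hxy]
    exact hCsmul ε h1.le c hc
  have hSsc : ∀ u ∈ S, ∀ t : ℝ, 0 < t → t • u ∈ S := by
    rintro u ⟨huC, ε₀, hε₀, hud⟩ t ht
    refine ⟨fun i => by rw [map_smul, smul_eq_mul]; exact mul_nonneg ht.le (huC i),
      ε₀ / t, div_pos hε₀ ht, ?_⟩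
    intro ε h1 h2
    have : a - (ε * t) • u ∈ D := hud (ε * t) (mul_pos h1 ht)
      ((le_div_iff₀ ht).1 h2)
    rwa [smul_smul]
  have hKey : ∀ σ' : Set (Fin n → ℝ), IsConeFace σ' {x | ∀ i, 0 ≤ ℓ i x} →
      ∀ u ∈ S, u ∈ σ' → ∀ w ∈ intrinsicInterior ℝ σ', w ∈ S := by
    intro σ' hface u huS huσ w hw
    obtain ⟨δ, hδ, hmem⟩ := relint_sub_smul hface.2.1 hw huσ
    have h1 : δ⁻¹ • w ∈ S := by
      have heq : δ⁻¹ • w = u + δ⁻¹ • (w - δ • u) := by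
        rw [smul_sub, smul_smul, inv_mul_cancel₀ hδ.ne', one_smul]; abel
      rw [heq]
      exact hSup _ huS _ (hCsmul _ (inv_nonneg.2 hδ.le) _ (hface.1 hmem))
    have h2 := hSsc _ h1 δ hδ
    rwa [smul_smul, mul_inv_cancel₀ hδ.ne', one_smul] at h2
  refine ⟨{σ | IsConeFace σ {x | ∀ i, 0 ≤ ℓ i x} ∧ ∃ u ∈ intrinsicInterior ℝ σ, u ∈ S},
    fun σ h => h.1, ?_, ?_⟩
  · rintro σ ⟨hσf, u, huI, huS⟩ σ' hσ' hsub
    have hne : (intrinsicInterior ℝ σ').Nonempty :=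
      Set.Nonempty.intrinsicInterior (face_convex hσ') ⟨0, hσ'.2.1⟩
    obtain ⟨w, hw⟩ := hne
    exact ⟨hσ', w, hw, hKey σ' hσ' u huS (hsub (intrinsicInterior_subset huI)) w hw⟩
  · have hSeq : S = ⋃ σ ∈ {σ | IsConeFace σ {x : Fin n → ℝ | ∀ i, 0 ≤ ℓ i x} ∧
        ∃ u ∈ intrinsicInterior ℝ σ, u ∈ S}, intrinsicInterior ℝ σ := by
      apply Set.Subset.antisymm
      · intro u huS
        exact Set.mem_biUnion ⟨minFace_isFace ℓ u, u,
          mem_intrinsicInterior_minFace ℓ huS.1, huS⟩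
          (mem_intrinsicInterior_minFace ℓ huS.1)
      · intro w hw
        simp only [Set.mem_iUnion, Set.mem_setOf_eq] at hw
        obtain ⟨σ, ⟨hface, u, huI, huS⟩, hwI⟩ := hw
        exact hKey σ hface u huS (intrinsicInterior_subset huI) w hwI
    rw [← hSeq]
    ext v
    simp only [Set.mem_setOf_eq, Set.mem_neg, hS]
    constructor
    · rintro ⟨hv, ε₀, hε₀, hvd⟩
      refine ⟨hv, ε₀, hε₀, fun ε h1 h2 => ?_⟩
      rw [smul_neg, sub_neg_eq_add]
      exact hvd ε h1 h2
    · rintro ⟨hv, ε₀, hε₀, hvd⟩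
      refine ⟨hv, ε₀, hε₀, fun ε h1 h2 => ?_⟩
      have := hvd ε h1 h2
      rwa [smul_neg, sub_neg_eq_add] at this
end

section
/- Let C be a pointed, spanning polyhedral cone in E = ℝⁿ, let D ⊆ E be a downset, and let σ be a face of C. Then the set D^σ := {a ∈ E | a − σ° ⊆ D} is itself a downset for the order induced by C, and it satisfies D ⊆ D^σ ⊆ closure(D), where closure denotes topological closure in E. -/
open Pointwise

section Helpers

variable {n : ℕ}

private lemma affSpan_eq_span {σ : Set (Fin n → ℝ)} (h0 : (0 : Fin n → ℝ) ∈ σ) :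
    ((affineSpan ℝ σ : Set (Fin n → ℝ))) = (Submodule.span ℝ σ : Set (Fin n → ℝ)) := by
  conv_lhs => rw [show σ = insert 0 σ from (Set.insert_eq_self.mpr h0).symm]
  rw [affineSpan_insert_zero]

/-- Metric characterization of the intrinsic interior of a set containing `0`. -/
private lemma mem_II_iff {σ : Set (Fin n → ℝ)} (h0 : (0 : Fin n → ℝ) ∈ σ)
    {x : Fin n → ℝ} :
    x ∈ intrinsicInterior ℝ σ ↔
      x ∈ Submodule.span ℝ σ ∧
        ∃ ε > 0, ∀ z : Fin n → ℝ, z ∈ Submodule.span ℝ σ → dist z x < ε → z ∈ σ := by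
  have hset := affSpan_eq_span h0
  constructor
  · rintro ⟨y, hy, rfl⟩
    have hy' : (y : Fin n → ℝ) ∈ Submodule.span ℝ σ := by
      rw [← SetLike.mem_coe, ← hset]; exact y.2
    refine ⟨hy', ?_⟩
    rw [mem_interior_iff_mem_nhds, Metric.mem_nhds_iff] at hy
    obtain ⟨ε, hε, hball⟩ := hy
    refine ⟨ε, hε, fun z hz hdist => ?_⟩
    have hzaff : z ∈ affineSpan ℝ σ := by
      rw [← SetLike.mem_coe, hset]; exact hz
    have : (⟨z, hzaff⟩ : affineSpan ℝ σ) ∈ Metric.ball y ε := by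
      simpa [Metric.mem_ball, Subtype.dist_eq] using hdist
    exact hball this
  · rintro ⟨hx, ε, hε, hball⟩
    have hxaff : x ∈ affineSpan ℝ σ := by
      rw [← SetLike.mem_coe, hset]; exact hx
    refine ⟨⟨x, hxaff⟩, ?_, rfl⟩
    rw [mem_interior_iff_mem_nhds, Metric.mem_nhds_iff]
    refine ⟨ε, hε, fun z hz => ?_⟩
    have hz' : (z : Fin n → ℝ) ∈ Submodule.span ℝ σ := by
      rw [← SetLike.mem_coe, ← hset]; exact z.2
    exact hball z hz' (by simpa [Metric.mem_ball, Subtype.dist_eq] using hz)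

end Helpers

section ConeHelpers

variable {n : ℕ} {C σ : Set (Fin n → ℝ)}

private lemma polyCone_smul (hC : IsPolyCone C) {t : ℝ} (ht : 0 ≤ t) {x : Fin n → ℝ}
    (hx : x ∈ C) : t • x ∈ C := by
  obtain ⟨m, ℓ, rfl⟩ := hC
  intro i
  have := hx i
  simpa [map_smul] using mul_nonneg ht this

private lemma face_smul (hC : IsPolyCone C) (hσ : IsConeFace σ C) {t : ℝ} (ht0 : 0 ≤ t)
    (ht1 : t ≤ 1) {x : Fin n → ℝ} (hx : x ∈ σ) : t • x ∈ σ := by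
  rcases eq_or_lt_of_le ht0 with rfl | ht0'
  · simpa using hσ.2.1
  rcases eq_or_lt_of_le ht1 with rfl | ht1'
  · simpa using hx
  have hxC : x ∈ C := hσ.1 hx
  have h1 : t • x ∈ C := polyCone_smul hC ht0 hxC
  have h2 : (1 - t) • x ∈ C := polyCone_smul hC (by linarith) hxC
  have hsum : t • x + (1 - t) • x ∈ σ := by
    have : t • x + (1 - t) • x = x := by rw [← add_smul]; simp
    rw [this]; exact hx
  exact (hσ.2.2.2 _ h1 _ h2 hsum).1

private lemma face_convex_s5 (hC : IsPolyCone C) (hσ : IsConeFace σ C) : Convex ℝ σ := by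
  intro x hx y hy a b ha hb hab
  have hax : a • x ∈ σ := face_smul hC hσ ha (by linarith) hx
  have hby : b • y ∈ σ := face_smul hC hσ hb (by linarith) hy
  exact hσ.2.2.1 _ hax _ hby

/-- The intrinsic interior of a face is stable under scaling by `t ∈ (0, 1]`. -/
private lemma face_II_smul (hC : IsPolyCone C) (hσ : IsConeFace σ C) {t : ℝ} (ht0 : 0 < t)
    (ht1 : t ≤ 1) {x : Fin n → ℝ} (hx : x ∈ intrinsicInterior ℝ σ) :
    t • x ∈ intrinsicInterior ℝ σ := by
  rw [mem_II_iff hσ.2.1] at hx ⊢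
  obtain ⟨hxspan, ε, hε, hball⟩ := hx
  refine ⟨Submodule.smul_mem _ t hxspan, t * ε, by positivity, fun z hz hdist => ?_⟩
  have hz' : t⁻¹ • z ∈ Submodule.span ℝ σ := Submodule.smul_mem _ _ hz
  have hdist' : dist (t⁻¹ • z) x < ε := by
    have : t⁻¹ • z - x = t⁻¹ • (z - t • x) := by
      rw [smul_sub, smul_smul, inv_mul_cancel₀ ht0.ne', one_smul]
    rw [dist_eq_norm, this, norm_smul, Real.norm_eq_abs, abs_of_pos (inv_pos.mpr ht0)]
    rw [dist_eq_norm] at hdist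
    calc t⁻¹ * ‖z - t • x‖ < t⁻¹ * (t * ε) := by
          exact mul_lt_mul_of_pos_left hdist (inv_pos.mpr ht0)
      _ = ε := by field_simp
  have hmem : t⁻¹ • z ∈ σ := hball _ hz' hdist'
  have : t • t⁻¹ • z ∈ σ := face_smul hC hσ ht0.le ht1 hmem
  rwa [smul_smul, mul_inv_cancel₀ ht0.ne', one_smul] at this

end ConeHelpers

/-- `D^σ = {a | a - σ° ⊆ D}` is a downset and `D ⊆ D^σ ⊆ closure D`. -/
theorem upSet_isDownset_and_between {n : ℕ} (C D σ : Set (Fin n → ℝ))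
    (hC : IsPolyCone C) (hpointed : C ∩ (-C) = {0}) (hspan : C - C = Set.univ)
    (hD : IsDownset C D) (hσ : IsConeFace σ C) :
    IsDownset C (upSet D σ) ∧ D ⊆ upSet D σ ∧ upSet D σ ⊆ closure D := by
  refine ⟨?_, ?_, ?_⟩
  · -- `upSet D σ` is a downset
    intro x y hy hyx s hs
    exact hD (x - s) (y - s) (hy s hs) (by simpa using hyx)
  · -- `D ⊆ upSet D σ`
    intro a ha s hs
    have hsC : s ∈ C := hσ.1 (intrinsicInterior_subset hs)
    exact hD (a - s) a ha (by simpa using hsC)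
  · -- `upSet D σ ⊆ closure D`
    intro a ha
    have hne : (intrinsicInterior ℝ σ).Nonempty :=
      Set.Nonempty.intrinsicInterior (face_convex_s5 hC hσ) ⟨0, hσ.2.1⟩
    obtain ⟨s₀, hs₀⟩ := hne
    rw [Metric.mem_closure_iff]
    intro ε hε
    set t : ℝ := min 1 (ε / (2 * (‖s₀‖ + 1))) with ht_def
    have hpos : 0 < ε / (2 * (‖s₀‖ + 1)) := by positivity
    have ht0 : 0 < t := lt_min one_pos hpos
    have ht1 : t ≤ 1 := min_le_left _ _
    have hmem : t • s₀ ∈ intrinsicInterior ℝ σ := face_II_smul hC hσ ht0 ht1 hs₀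
    refine ⟨a - t • s₀, ha _ hmem, ?_⟩
    have : dist a (a - t • s₀) = t * ‖s₀‖ := by
      rw [dist_eq_norm]
      have : a - (a - t • s₀) = t • s₀ := by abel
      rw [this, norm_smul, Real.norm_eq_abs, abs_of_pos ht0]
    rw [this]
    calc t * ‖s₀‖ ≤ (ε / (2 * (‖s₀‖ + 1))) * ‖s₀‖ := by
          exact mul_le_mul_of_nonneg_right (min_le_right _ _) (norm_nonneg _)
      _ < ε := by
          rw [div_mul_eq_mul_div, div_lt_iff₀ (by positivity)]
          nlinarith [norm_nonneg s₀]
end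

section
/- Let C be a pointed, spanning polyhedral cone in E = ℝⁿ and let D ⊆ E be a downset. If σ' ⊆ σ are faces of C, then D^{σ'} ⊆ D^σ; that is, every a ∈ E with a − σ'° ⊆ D also satisfies a − σ° ⊆ D. -/
open Pointwise

section AuxUpSetMono

open Set

variable {n : ℕ}

/-- From a relative interior point of `σ` one can move slightly in the direction `-y`
for any `y ∈ σ`, staying in `σ`. -/
lemma exists_sub_smul_mem_aux {σ : Set (Fin n → ℝ)} (h0 : (0:Fin n → ℝ) ∈ σ)
    {s y : Fin n → ℝ} (hs : s ∈ intrinsicInterior ℝ σ) (hy : y ∈ σ) :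
    ∃ δ : ℝ, 0 < δ ∧ s - δ • y ∈ σ := by
  obtain ⟨x, hx, hxs⟩ := hs
  have hyA : y ∈ affineSpan ℝ σ := subset_affineSpan ℝ σ hy
  have h0A : (0:Fin n → ℝ) ∈ affineSpan ℝ σ := subset_affineSpan ℝ σ h0
  have hmem : ∀ δ : ℝ, s - δ • y ∈ affineSpan ℝ σ := by
    intro δ
    have := (affineSpan ℝ σ).smul_vsub_vadd_mem δ h0A hyA x.2
    simpa [hxs, smul_sub, sub_eq_add_neg, add_comm] using this
  set g : ℝ → affineSpan ℝ σ := fun δ => ⟨s - δ • y, hmem δ⟩ with hg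
  have hgc : Continuous g := by
    apply Continuous.subtype_mk
    fun_prop
  have h0' : g 0 = x := by
    ext1
    simp [hg, hxs]
  have hopen : IsOpen (g ⁻¹' interior ((↑) ⁻¹' σ : Set (affineSpan ℝ σ))) :=
    isOpen_interior.preimage hgc
  have h0mem : (0:ℝ) ∈ g ⁻¹' interior ((↑) ⁻¹' σ) := by
    simp [h0', hx]
  obtain ⟨ε, hε, hball⟩ := Metric.isOpen_iff.1 hopen 0 h0mem
  refine ⟨ε/2, by positivity, ?_⟩
  have : g (ε/2) ∈ interior ((↑) ⁻¹' σ : Set (affineSpan ℝ σ)) := by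
    apply hball
    simp [Real.dist_eq, abs_of_nonneg hε.le, abs_of_pos hε]
    linarith
  exact (interior_subset this : _ ∈ (Subtype.val ⁻¹' σ))

/-- Positive scalings preserve the intrinsic interior of a set closed under positive
scalar multiplication. -/
lemma smul_mem_intrinsicInterior_aux {σ : Set (Fin n → ℝ)} (h0 : (0:Fin n → ℝ) ∈ σ)
    (hsc : ∀ r : ℝ, 0 < r → ∀ x ∈ σ, r • x ∈ σ)
    {t : ℝ} (ht : 0 < t) {s : Fin n → ℝ} (hs : s ∈ intrinsicInterior ℝ σ) :
    t • s ∈ intrinsicInterior ℝ σ := by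
  obtain ⟨x, hx, hxs⟩ := hs
  have h0A : (0:Fin n → ℝ) ∈ affineSpan ℝ σ := subset_affineSpan ℝ σ h0
  have hmemA : ∀ (r : ℝ) (z : Fin n → ℝ), z ∈ affineSpan ℝ σ → r • z ∈ affineSpan ℝ σ := by
    intro r z hz
    have := (affineSpan ℝ σ).smul_vsub_vadd_mem r hz h0A h0A
    simpa using this
  set ψ : affineSpan ℝ σ → affineSpan ℝ σ := fun z => ⟨t⁻¹ • (z:Fin n → ℝ), hmemA _ _ z.2⟩ with hψ
  have hψc : Continuous ψ := by
    apply Continuous.subtype_mk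
    fun_prop
  set S : Set (affineSpan ℝ σ) := (↑) ⁻¹' σ with hS
  have hsub : ψ ⁻¹' interior S ⊆ S := by
    intro z hz
    have h1 : t⁻¹ • (z:Fin n → ℝ) ∈ σ := (interior_subset (hz : ψ z ∈ interior S) : ψ z ∈ S)
    have := hsc t ht _ h1
    exact (by simpa [smul_smul, mul_inv_cancel₀ ht.ne'] using this : (z:Fin n → ℝ) ∈ σ)
  have htx : (⟨t • s, hmemA _ _ (hxs ▸ x.2)⟩ : affineSpan ℝ σ) ∈ ψ ⁻¹' interior S := by
    show ψ _ ∈ interior S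
    have : ψ ⟨t • s, hmemA _ _ (hxs ▸ x.2)⟩ = x := by
      ext1
      simp [hψ, smul_smul, inv_mul_cancel₀ ht.ne', hxs]
    rw [this]; exact hx
  have hint : (⟨t • s, hmemA _ _ (hxs ▸ x.2)⟩ : affineSpan ℝ σ) ∈ interior S :=
    interior_maximal hsub (isOpen_interior.preimage hψc) htx
  exact ⟨_, hint, rfl⟩

lemma polyCone_smul_aux {C : Set (Fin n → ℝ)} (hC : IsPolyCone C) :
    ∀ r : ℝ, 0 ≤ r → ∀ x ∈ C, r • x ∈ C := by
  obtain ⟨m, ℓ, rfl⟩ := hC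
  intro r hr x hx i
  have : (ℓ i) (r • x) = r * ℓ i x := by simp
  rw [this]
  exact mul_nonneg hr (hx i)

lemma face_nsmul_aux {C σ : Set (Fin n → ℝ)} (hσ : IsConeFace σ C) :
    ∀ (k : ℕ), ∀ x ∈ σ, ((k+1 : ℕ) : ℝ) • x ∈ σ := by
  intro k
  induction k with
  | zero => intro x hx; simpa using hx
  | succ k ih =>
      intro x hx
      have h1 := hσ.2.2.1 _ (ih x hx) _ hx
      have : ((k+1+1 : ℕ) : ℝ) • x = ((k+1 : ℕ) : ℝ) • x + x := by
        push_cast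
        rw [add_smul, one_smul]
      rw [this]
      exact h1

/-- Faces of polyhedral cones are closed under positive scalar multiplication. -/
lemma face_smul_aux {C σ : Set (Fin n → ℝ)} (hC : IsPolyCone C) (hσ : IsConeFace σ C) :
    ∀ r : ℝ, 0 < r → ∀ x ∈ σ, r • x ∈ σ := by
  have small : ∀ r : ℝ, 0 < r → r ≤ 1 → ∀ x ∈ σ, r • x ∈ σ := by
    intro r hr hr1 x hx
    have hxC : x ∈ C := hσ.1 hx
    have h1 : r • x ∈ C := polyCone_smul_aux hC r hr.le x hxC
    have h2 : (1 - r) • x ∈ C := polyCone_smul_aux hC _ (by linarith) x hxC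
    have h3 : r • x + (1 - r) • x ∈ σ := by
      rw [← add_smul]
      simpa using hx
    exact (hσ.2.2.2 _ h1 _ h2 h3).1
  intro r hr x hx
  rcases le_or_gt r 1 with h | h
  · exact small r hr h x hx
  · set k := ⌈r⌉₊ - 1 with hk
    have hk1 : (⌈r⌉₊ : ℝ) = ((k + 1 : ℕ) : ℝ) := by
      rw [hk]
      have : 1 ≤ ⌈r⌉₊ := Nat.one_le_ceil_iff.2 (by linarith)
      push_cast [Nat.sub_add_cancel this]
      ring
    have hck : 0 < (⌈r⌉₊ : ℝ) := by
      have : 1 ≤ ⌈r⌉₊ := Nat.one_le_ceil_iff.2 (by linarith)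
      exact_mod_cast this
    have hdiv : 0 < r / ⌈r⌉₊ := div_pos (by linarith) hck
    have hdiv1 : r / ⌈r⌉₊ ≤ 1 := by
      rw [div_le_one hck]
      exact Nat.le_ceil r
    have h1 : (r / ⌈r⌉₊) • x ∈ σ := small _ hdiv hdiv1 x hx
    have h2 := face_nsmul_aux hσ k _ h1
    rw [← hk1, smul_smul, mul_div_cancel₀ r hck.ne'] at h2
    exact h2

/-- Faces of polyhedral cones are convex. -/
lemma face_convex_aux {C σ : Set (Fin n → ℝ)} (hC : IsPolyCone C) (hσ : IsConeFace σ C) :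
    Convex ℝ σ := by
  intro x hx y hy a b ha hb hab
  have hax : a • x ∈ σ := by
    rcases ha.eq_or_lt with h | h
    · simpa [← h] using hσ.2.1
    · exact face_smul_aux hC hσ a h x hx
  have hby : b • y ∈ σ := by
    rcases hb.eq_or_lt with h | h
    · simpa [← h] using hσ.2.1
    · exact face_smul_aux hC hσ b h y hy
  exact hσ.2.2.1 _ hax _ hby

end AuxUpSetMono

/-- If `σ' ⊆ σ` are faces then `D^{σ'} ⊆ D^σ`. -/
theorem upSet_mono_faces {n : ℕ} (C D σ σ' : Set (Fin n → ℝ))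
    (hC : IsPolyCone C) (hpointed : C ∩ (-C) = {0}) (hspan : C - C = Set.univ)
    (hD : IsDownset C D) (hσ : IsConeFace σ C) (hσ' : IsConeFace σ' C)
    (hss : σ' ⊆ σ) :
    upSet D σ' ⊆ upSet D σ := by
  intro a ha s hs
  obtain ⟨s'₀, hs'₀⟩ := Set.Nonempty.intrinsicInterior (face_convex_aux hC hσ') ⟨0, hσ'.2.1⟩
  have hs'₀σ' : s'₀ ∈ σ' := intrinsicInterior_subset hs'₀
  have hs'₀σ : s'₀ ∈ σ := hss hs'₀σ'
  have hsσ : s ∈ σ := intrinsicInterior_subset hs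
  obtain ⟨m, ℓ, hCeq⟩ := hC
  have hσC : ∀ z ∈ σ, ∀ i, 0 ≤ ℓ i z := fun z hz i => by
    have := hσ.1 hz; rw [hCeq] at this; exact this i
  -- if `ℓ i` vanishes at the relative interior point `s`, it vanishes on all of `σ`
  have hvan : ∀ i, ℓ i s = 0 → ℓ i s'₀ = 0 := by
    intro i hi
    obtain ⟨δ, hδ, hδmem⟩ := exists_sub_smul_mem_aux hσ.2.1 hs hs'₀σ
    have h1 := hσC _ hδmem i
    have h2 : (ℓ i) (s - δ • s'₀) = ℓ i s - δ * ℓ i s'₀ := by simp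
    rw [h2, hi] at h1
    have h3 : ℓ i s'₀ ≤ 0 := by nlinarith
    exact le_antisymm h3 (hσC _ hs'₀σ i)
  -- choose `ε > 0` small enough that `ε * ℓ i s'₀ ≤ ℓ i s` for all `i`
  set f : Fin m → ℝ := fun i => if 0 < ℓ i s'₀ then ℓ i s / ℓ i s'₀ else 1 with hf
  set F : Finset ℝ := insert (1:ℝ) (Finset.univ.image f) with hF
  have hFne : F.Nonempty := ⟨1, Finset.mem_insert_self _ _⟩
  set ε : ℝ := F.min' hFne with hε
  have hεpos : 0 < ε := by
    rw [hε, Finset.lt_min'_iff]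
    intro y hy
    rw [hF, Finset.mem_insert] at hy
    rcases hy with rfl | hy
    · norm_num
    · obtain ⟨i, _, rfl⟩ := Finset.mem_image.1 hy
      rw [hf]
      by_cases h : 0 < ℓ i s'₀
      · simp only [h, if_pos]
        apply div_pos _ h
        rcases (hσC _ hsσ i).eq_or_lt with h' | h'
        · exact absurd (hvan i h'.symm) h.ne'
        · exact h'
      · simp [h]
  have hεle : ∀ i, ε * ℓ i s'₀ ≤ ℓ i s := by
    intro i
    rcases (hσC _ hs'₀σ i).eq_or_lt with h | h
    · rw [← h, mul_zero]; exact hσC _ hsσ i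
    · have : ε ≤ f i := Finset.min'_le _ _ (by
        rw [hF]; exact Finset.mem_insert_of_mem (Finset.mem_image_of_mem f (Finset.mem_univ i)))
      rw [hf] at this
      simp only [h, if_pos] at this
      rw [div_eq_mul_inv] at this
      calc ε * ℓ i s'₀ ≤ (ℓ i s * (ℓ i s'₀)⁻¹) * ℓ i s'₀ := by nlinarith
        _ = ℓ i s := by field_simp
  -- conclude using the downset property
  have hs' : ε • s'₀ ∈ intrinsicInterior ℝ σ' :=
    smul_mem_intrinsicInterior_aux hσ'.2.1 (face_smul_aux ⟨m, ℓ, hCeq⟩ hσ') hεpos hs'₀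
  have hD1 : a - ε • s'₀ ∈ D := ha _ hs'
  apply hD (a - s) (a - ε • s'₀) hD1
  rw [hCeq]
  intro i
  have : (ℓ i) (a - ε • s'₀ - (a - s)) = ℓ i s - ε * ℓ i s'₀ := by
    have : a - ε • s'₀ - (a - s) = s - ε • s'₀ := by module
    rw [this]; simp
  rw [this]
  linarith [hεle i]
end

section
/- Let C be a pointed, spanning polyhedral cone in E = ℝⁿ and let D ⊆ E be a downset. Suppose b ∈ D is such that the part of D above b is closed: (b + C) ∩ D = (b + C) ∩ closure(D). Then there exist a face τ of C and a point a ∈ D with b ≼ a and (a + C) ∩ D = a + τ (i.e., a is a closed cogenerator of D along τ). -/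
open Pointwise

namespace CogenAux

open Filter Topology

variable {n m : ℕ}

variable {n m : ℕ}

/-- The cone cut out by the functionals. -/
def Pc (ℓ : Fin m → ((Fin n → ℝ) →ₗ[ℝ] ℝ)) : Set (Fin n → ℝ) := {x | ∀ i, 0 ≤ ℓ i x}

lemma Pc_zero (ℓ : Fin m → ((Fin n → ℝ) →ₗ[ℝ] ℝ)) : (0 : Fin n → ℝ) ∈ Pc ℓ := by
  intro i; simp

lemma Pc_add {ℓ : Fin m → ((Fin n → ℝ) →ₗ[ℝ] ℝ)} {x y : Fin n → ℝ}
    (hx : x ∈ Pc ℓ) (hy : y ∈ Pc ℓ) : x + y ∈ Pc ℓ := by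
  intro i; rw [map_add]; exact add_nonneg (hx i) (hy i)

lemma Pc_smul {ℓ : Fin m → ((Fin n → ℝ) →ₗ[ℝ] ℝ)} {x : Fin n → ℝ} {t : ℝ}
    (ht : 0 ≤ t) (hx : x ∈ Pc ℓ) : t • x ∈ Pc ℓ := by
  intro i; rw [map_smul]; exact mul_nonneg ht (hx i)

lemma isClosed_Pc (ℓ : Fin m → ((Fin n → ℝ) →ₗ[ℝ] ℝ)) : IsClosed (Pc ℓ) := by
  have : Pc ℓ = ⋂ i, (ℓ i) ⁻¹' (Set.Ici 0) := by
    ext x; simp [Pc, Set.mem_iInter]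
  rw [this]
  exact isClosed_iInter fun i =>
    IsClosed.preimage (ℓ i).continuous_of_finiteDimensional isClosed_Ici

/-- A closed downset inside the cone. -/
structure DS (ℓ : Fin m → ((Fin n → ℝ) →ₗ[ℝ] ℝ)) (U : Set (Fin n → ℝ)) : Prop where
  sub : U ⊆ Pc ℓ
  cl : IsClosed U
  dn : ∀ x ∈ U, ∀ y ∈ Pc ℓ, x - y ∈ Pc ℓ → y ∈ U

/-- The upset of `U` at `c`. -/
def Up (ℓ : Fin m → ((Fin n → ℝ) →ₗ[ℝ] ℝ)) (U : Set (Fin n → ℝ)) (c : Fin n → ℝ) :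
    Set (Fin n → ℝ) := {x | x ∈ Pc ℓ ∧ c + x ∈ U}

lemma DS_Up {ℓ : Fin m → ((Fin n → ℝ) →ₗ[ℝ] ℝ)} {U : Set (Fin n → ℝ)}
    (hU : DS ℓ U) {c : Fin n → ℝ} (hc : c ∈ Pc ℓ) : DS ℓ (Up ℓ U c) where
  sub := fun x hx => hx.1
  cl := by
    have : Up ℓ U c = Pc ℓ ∩ (fun x => c + x) ⁻¹' U := rfl
    rw [this]
    exact (isClosed_Pc ℓ).inter (hU.cl.preimage (continuous_const.add continuous_id))
  dn := by
    intro x hx y hy hxy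
    refine ⟨hy, hU.dn (c + x) hx.2 (c + y) (Pc_add hc hy) ?_⟩
    have : c + x - (c + y) = x - y := by ring
    rw [this]; exact hxy

lemma Up_zero_mem {ℓ : Fin m → ((Fin n → ℝ) →ₗ[ℝ] ℝ)} {U : Set (Fin n → ℝ)}
    {c : Fin n → ℝ} (hc : c ∈ U) : (0 : Fin n → ℝ) ∈ Up ℓ U c :=
  ⟨Pc_zero ℓ, by simpa using hc⟩

lemma Up_Up {ℓ : Fin m → ((Fin n → ℝ) →ₗ[ℝ] ℝ)} {U : Set (Fin n → ℝ)}
    {c g : Fin n → ℝ} (hg : g ∈ Pc ℓ) :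
    Up ℓ (Up ℓ U c) g = Up ℓ U (c + g) := by
  ext x
  constructor
  · rintro ⟨hx, -, hmem⟩
    exact ⟨hx, by rwa [add_assoc]⟩
  · rintro ⟨hx, hmem⟩
    exact ⟨hx, Pc_add hg hx, by rwa [← add_assoc]⟩

/-- If `ψ` has no maximum on the closed downset `U`, there is an escape: some new
functional `ℓ i₁` can be pinned to zero without lowering the sup of `ψ`. -/
lemma escape (ℓ : Fin m → ((Fin n → ℝ) →ₗ[ℝ] ℝ))
    (hptd : ∀ x ∈ Pc ℓ, (∀ i, ℓ i x = 0) → x = 0)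
    (ψ : (Fin n → ℝ) →ₗ[ℝ] ℝ)
    {U : Set (Fin n → ℝ)} (hU : DS ℓ U) (hne : U.Nonempty)
    (hbdd : BddAbove (ψ '' U))
    (P : Finset (Fin m)) (hPz : ∀ x ∈ U, ∀ i ∈ P, ℓ i x = 0)
    (hnomax : ¬ ∃ g ∈ U, ∀ x ∈ U, ψ x ≤ ψ g) :
    ∃ i₁, i₁ ∉ P ∧ (U ∩ {x | ℓ i₁ x = 0}).Nonempty ∧
      ∀ g ∈ U ∩ {x | ℓ i₁ x = 0}, (∀ x ∈ U ∩ {x | ℓ i₁ x = 0}, ψ x ≤ ψ g) →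
        ∀ x ∈ U, ψ x ≤ ψ g := by
  classical
  set s := sSup (ψ '' U) with hs
  have hneim : (ψ '' U).Nonempty := hne.image ψ
  have hle : ∀ x ∈ U, ψ x ≤ s := fun x hx => le_csSup hbdd ⟨x, hx, rfl⟩
  -- step 1 : a maximizing sequence escaping to infinity
  have seq : ∀ j : ℕ, ∃ x ∈ U, s - 1/(j+1) < ψ x ∧ (j : ℝ) < ‖x‖ := by
    intro j
    by_contra h
    push_neg at h
    have hpos : (0:ℝ) < 1/(j+1) := by positivity
    rcases (U ∩ Metric.closedBall 0 j).eq_empty_or_nonempty with hK | hK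
    · obtain ⟨w, hwmem, hw⟩ := exists_lt_of_lt_csSup hneim (by linarith : s - 1/(j+1) < s)
      obtain ⟨x, hxU, rfl⟩ := hwmem
      have := h x hxU hw
      exact Set.eq_empty_iff_forall_notMem.1 hK x ⟨hxU, by simpa [Metric.mem_closedBall,
        dist_zero_right] using this⟩
    · have hKc : IsCompact (U ∩ Metric.closedBall 0 j) :=
        (isCompact_closedBall (0 : Fin n → ℝ) j).inter_left hU.cl
      obtain ⟨z, hzK, hzmax'⟩ := hKc.exists_isMaxOn hK
        (ψ.continuous_of_finiteDimensional.continuousOn)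
      have hzmax : ∀ w ∈ U ∩ Metric.closedBall 0 j, ψ w ≤ ψ z := fun w hw => hzmax' hw
      obtain ⟨x', hx'U, hx'⟩ : ∃ x' ∈ U, ψ z < ψ x' := by
        by_contra h2; push_neg at h2; exact hnomax ⟨z, hzK.1, h2⟩
      have hzlt : ψ z < s := lt_of_lt_of_le hx' (hle x' hx'U)
      obtain ⟨w, hwmem, hw⟩ := exists_lt_of_lt_csSup hneim
        (max_lt hzlt (by linarith : s - 1/(j+1) < s))
      obtain ⟨x, hxU, rfl⟩ := hwmem
      have h1 : s - 1/(j+1) < ψ x := lt_of_le_of_lt (le_max_right _ _) hw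
      have h2 : ‖x‖ ≤ j := h x hxU h1
      have : ψ x ≤ ψ z := hzmax x ⟨hxU, by simpa [Metric.mem_closedBall, dist_zero_right] using h2⟩
      exact absurd (lt_of_le_of_lt (le_max_left _ _) hw) (not_lt.2 this)
  choose x hxU hxψ hxnorm using seq
  have hxpos : ∀ j, (0:ℝ) < ‖x j‖ := fun j =>
    lt_of_le_of_lt (Nat.cast_nonneg j) (hxnorm j)
  have hxne : ∀ j, x j ≠ 0 := fun j => by
    intro h; have := hxpos j; rw [h] at this; simp at this
  -- limits of the maximizing sequence
  have hψx : Tendsto (fun j => ψ (x j)) atTop (𝓝 s) := by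
    have hlow : Tendsto (fun j : ℕ => s - 1/(j+1)) atTop (𝓝 s) := by
      have := tendsto_one_div_add_atTop_nhds_zero_nat (𝕜 := ℝ)
      simpa using (tendsto_const_nhds (x := s)).sub this
    exact tendsto_of_tendsto_of_tendsto_of_le_of_le hlow tendsto_const_nhds
      (fun j => le_of_lt (hxψ j)) (fun j => hle _ (hxU j))
  have hnormx : Tendsto (fun j => ‖x j‖) atTop atTop :=
    tendsto_atTop_mono (fun j => le_of_lt (hxnorm j)) tendsto_natCast_atTop_atTop
  -- direction of escape
  set u : ℕ → (Fin n → ℝ) := fun j => ‖x j‖⁻¹ • x j with hu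
  have husph : ∀ j, u j ∈ Metric.sphere (0 : Fin n → ℝ) 1 := by
    intro j
    rw [mem_sphere_zero_iff_norm]
    rw [norm_smul]
    simp [abs_of_nonneg (inv_nonneg.2 (norm_nonneg (x j))),
      inv_mul_cancel₀ (ne_of_gt (hxpos j))]
  obtain ⟨v, hvsph, φ, hφ, hconv⟩ :=
    (isCompact_sphere (0 : Fin n → ℝ) 1).tendsto_subseq husph
  have hφle : ∀ j, j ≤ φ j := fun j => hφ.le_apply
  have hnormz : Tendsto (fun j => ‖x (φ j)‖) atTop atTop :=
    hnormx.comp (hφ.tendsto_atTop)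
  have hψz : Tendsto (fun j => ψ (x (φ j))) atTop (𝓝 s) := hψx.comp (hφ.tendsto_atTop)
  have hlin : ∀ f : (Fin n → ℝ) →ₗ[ℝ] ℝ,
      Tendsto (fun j => ‖x (φ j)‖⁻¹ * f (x (φ j))) atTop (𝓝 (f v)) := by
    intro f
    have h1 := (f.continuous_of_finiteDimensional.tendsto v).comp hconv
    refine Filter.Tendsto.congr (fun j => ?_) h1
    simp [hu, Function.comp, map_smul, smul_eq_mul]
  have hvPc : v ∈ Pc ℓ := by
    intro i
    refine ge_of_tendsto (hlin (ℓ i)) (Eventually.of_forall fun j => ?_)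
    exact mul_nonneg (inv_nonneg.2 (norm_nonneg _)) (hU.sub (hxU (φ j)) i)
  have hvP0 : ∀ i ∈ P, ℓ i v = 0 := by
    intro i hi
    have h0 : Tendsto (fun j => ‖x (φ j)‖⁻¹ * (ℓ i) (x (φ j))) atTop (𝓝 0) := by
      have : ∀ j, ‖x (φ j)‖⁻¹ * (ℓ i) (x (φ j)) = 0 := by
        intro j; rw [hPz _ (hxU (φ j)) i hi, mul_zero]
      simp only [this]
      exact tendsto_const_nhds
    exact tendsto_nhds_unique (hlin (ℓ i)) h0
  have hψv : ψ v = 0 := by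
    have h0 : Tendsto (fun j => ‖x (φ j)‖⁻¹ * ψ (x (φ j))) atTop (𝓝 (0 * s)) :=
      (tendsto_inv_atTop_zero.comp hnormz).mul hψz
    rw [zero_mul] at h0
    exact tendsto_nhds_unique (hlin ψ) h0
  have hvne : v ≠ 0 := by
    intro h
    have := mem_sphere_zero_iff_norm.1 hvsph
    rw [h] at this; simp at this
  obtain ⟨i₀, hi₀⟩ : ∃ i, 0 < ℓ i v := by
    by_contra h; push_neg at h
    exact hvne (hptd v hvPc fun i => le_antisymm (h i) (hvPc i))
  -- compression of the sequence along v
  set J : Finset (Fin m) := Finset.univ.filter (fun i => 0 < ℓ i v) with hJ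
  have hi₀J : i₀ ∈ J := by simp [hJ, hi₀]
  have hTne : ∀ j : ℕ, (J.image fun i => ℓ i (x (φ j)) / ℓ i v).Nonempty :=
    fun j => ⟨_, Finset.mem_image_of_mem _ hi₀J⟩
  have tspec : ∀ j : ℕ, ∃ tj : ℝ, 0 ≤ tj ∧ (∀ i ∈ J, tj ≤ ℓ i (x (φ j)) / ℓ i v) ∧
      ∃ i ∈ J, tj = ℓ i (x (φ j)) / ℓ i v := by
    intro j
    refine ⟨(J.image fun i => ℓ i (x (φ j)) / ℓ i v).min' (hTne j), ?_, ?_, ?_⟩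
    · apply Finset.le_min'
      intro w hw
      obtain ⟨i, hiJ, rfl⟩ := Finset.mem_image.1 hw
      have hpos : 0 < ℓ i v := by simpa [hJ] using (Finset.mem_filter.1 hiJ).2
      exact div_nonneg (hU.sub (hxU (φ j)) i) (le_of_lt hpos)
    · intro i hiJ
      exact Finset.min'_le _ _ (Finset.mem_image_of_mem _ hiJ)
    · obtain ⟨i, hiJ, heq⟩ := Finset.mem_image.1 (Finset.min'_mem _ (hTne j))
      exact ⟨i, hiJ, heq.symm⟩
  choose t ht0 htle hthit using tspec
  set y : ℕ → (Fin n → ℝ) := fun j => x (φ j) - t j • v with hy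
  have hyPc : ∀ j, y j ∈ Pc ℓ := by
    intro j i
    rw [hy]; simp only [map_sub, map_smul, smul_eq_mul]
    rcases lt_or_ge 0 (ℓ i v) with hpos | hle0
    · have hiJ : i ∈ J := by simp [hJ, hpos]
      have h2 := (le_div_iff₀ hpos).1 (htle j i hiJ)
      linarith
    · have h0 : ℓ i v = 0 := le_antisymm hle0 (hvPc i)
      rw [h0, mul_zero, sub_zero]
      exact hU.sub (hxU (φ j)) i
  have hyU : ∀ j, y j ∈ U := by
    intro j
    refine hU.dn (x (φ j)) (hxU (φ j)) (y j) (hyPc j) ?_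
    have heq : x (φ j) - y j = t j • v := by rw [hy]; exact sub_sub_cancel _ _
    rw [heq]
    exact Pc_smul (ht0 j) hvPc
  have hψy : ∀ j, ψ (y j) = ψ (x (φ j)) := by
    intro j; rw [hy]; simp [map_sub, map_smul, smul_eq_mul, hψv]
  have hhit : ∀ j, ∃ i ∈ J, ℓ i (y j) = 0 := by
    intro j
    obtain ⟨i, hiJ, hieq⟩ := hthit j
    refine ⟨i, hiJ, ?_⟩
    have hpos : 0 < ℓ i v := by simpa [hJ] using (Finset.mem_filter.1 hiJ).2
    rw [hy]; simp only [map_sub, map_smul, smul_eq_mul]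
    rw [hieq, div_mul_cancel₀ _ (ne_of_gt hpos), sub_self]
  -- pigeonhole: one index is hit infinitely often
  obtain ⟨i₁, hi₁J, hi₁inf⟩ : ∃ i ∈ J, {j : ℕ | ℓ i (y j) = 0}.Infinite := by
    by_contra h; push_neg at h
    have hcover : (Set.univ : Set ℕ) ⊆ ⋃ i ∈ J, {j : ℕ | ℓ i (y j) = 0} := by
      intro j _
      obtain ⟨i, hiJ, hi0⟩ := hhit j
      exact Set.mem_biUnion hiJ hi0
    have hfin : (⋃ i ∈ J, {j : ℕ | ℓ i (y j) = 0}).Finite :=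
      Set.Finite.biUnion J.finite_toSet (fun i hi => h i hi)
    exact Set.infinite_univ (hfin.subset hcover)
  have hi₁v : 0 < ℓ i₁ v := by simpa [hJ] using (Finset.mem_filter.1 hi₁J).2
  have hi₁P : i₁ ∉ P := fun hmem => by
    have := hvP0 i₁ hmem; rw [this] at hi₁v; exact lt_irrefl 0 hi₁v
  refine ⟨i₁, hi₁P, ?_, ?_⟩
  · obtain ⟨j, hj⟩ := hi₁inf.nonempty
    exact ⟨y j, hyU j, hj⟩
  · intro g hg hgmax x₀ hx₀
    have hsle : s ≤ ψ g := by
      by_contra hlt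
      push_neg at hlt
      have hev : ∀ᶠ j in atTop, ψ g < ψ (x (φ j)) := hψz.eventually (eventually_gt_nhds hlt)
      obtain ⟨J₀, hJ₀⟩ := eventually_atTop.1 hev
      obtain ⟨j, hjS, hjgt⟩ := hi₁inf.exists_gt J₀
      have hyU' : y j ∈ U ∩ {x | ℓ i₁ x = 0} := ⟨hyU j, hjS⟩
      have := hgmax (y j) hyU'
      rw [hψy j] at this
      exact absurd (hJ₀ j (le_of_lt hjgt)) (not_lt.2 this)
    exact le_trans (hle x₀ hx₀) hsle

/-- A bounded-above linear functional attains its supremum on a nonempty closed downset. -/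
lemma lemX (ℓ : Fin m → ((Fin n → ℝ) →ₗ[ℝ] ℝ))
    (hptd : ∀ x ∈ Pc ℓ, (∀ i, ℓ i x = 0) → x = 0)
    (ψ : (Fin n → ℝ) →ₗ[ℝ] ℝ) :
    ∀ (k : ℕ) (P : Finset (Fin m)) (U : Set (Fin n → ℝ)), DS ℓ U → U.Nonempty →
      (∀ x ∈ U, ∀ i ∈ P, ℓ i x = 0) → BddAbove (ψ '' U) → m ≤ k + P.card →
      ∃ g ∈ U, ∀ x ∈ U, ψ x ≤ ψ g := by
  intro k
  induction k with
  | zero =>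
    intro P U hU hne hPz hbdd hcard
    by_cases hmax : ∃ g ∈ U, ∀ x ∈ U, ψ x ≤ ψ g
    · exact hmax
    · exfalso
      obtain ⟨i₁, hi₁P, -, -⟩ := escape ℓ hptd ψ hU hne hbdd P hPz hmax
      have hc : P.card = Fintype.card (Fin m) := by
        have h1 : P.card ≤ Fintype.card (Fin m) := P.card_le_univ
        simp only [Fintype.card_fin] at h1 ⊢
        omega
      exact hi₁P ((Finset.eq_univ_of_card P hc) ▸ Finset.mem_univ i₁)
  | succ k IH =>
    intro P U hU hne hPz hbdd hcard
    by_cases hmax : ∃ g ∈ U, ∀ x ∈ U, ψ x ≤ ψ g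
    · exact hmax
    · obtain ⟨i₁, hi₁P, hne', htrans⟩ := escape ℓ hptd ψ hU hne hbdd P hPz hmax
      have hcl' : IsClosed {x : Fin n → ℝ | ℓ i₁ x = 0} :=
        isClosed_eq (ℓ i₁).continuous_of_finiteDimensional continuous_const
      have hU' : DS ℓ (U ∩ {x | ℓ i₁ x = 0}) := by
        refine ⟨fun x hx => hU.sub hx.1, hU.cl.inter hcl', ?_⟩
        intro x hx y hy hxy
        refine ⟨hU.dn x hx.1 y hy hxy, ?_⟩
        have h1 : 0 ≤ ℓ i₁ y := hy i₁
        have h2 : 0 ≤ ℓ i₁ (x - y) := hxy i₁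
        rw [map_sub] at h2
        have h3 : ℓ i₁ x = 0 := hx.2
        simp only [Set.mem_setOf_eq]
        linarith
      have hPz' : ∀ x ∈ U ∩ {x | ℓ i₁ x = 0}, ∀ i ∈ insert i₁ P, ℓ i x = 0 := by
        intro x hx i hi
        rcases Finset.mem_insert.1 hi with rfl | hiP
        · exact hx.2
        · exact hPz x hx.1 i hiP
      have hbdd' : BddAbove (ψ '' (U ∩ {x | ℓ i₁ x = 0})) :=
        hbdd.mono (Set.image_mono Set.inter_subset_left)
      have hcard' : m ≤ k + (insert i₁ P).card := by
        rw [Finset.card_insert_of_notMem hi₁P]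
        omega
      obtain ⟨g, hgU', hgmax⟩ := IH (insert i₁ P) _ hU' hne' hPz' hbdd' hcard'
      exact ⟨g, hgU'.1, htrans g hgU' hgmax⟩

/-- The set of indices whose functional is bounded above on `U`. -/
noncomputable def IB (ℓ : Fin m → ((Fin n → ℝ) →ₗ[ℝ] ℝ)) (U : Set (Fin n → ℝ)) :
    Finset (Fin m) := (Set.toFinite {i | BddAbove (ℓ i '' U)}).toFinset

lemma mem_IB {ℓ : Fin m → ((Fin n → ℝ) →ₗ[ℝ] ℝ)} {U : Set (Fin n → ℝ)} {i : Fin m} :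
    i ∈ IB ℓ U ↔ BddAbove (ℓ i '' U) := Set.Finite.mem_toFinset _

lemma IB_mono_Up {ℓ : Fin m → ((Fin n → ℝ) →ₗ[ℝ] ℝ)} {U : Set (Fin n → ℝ)}
    {c : Fin n → ℝ} (_hc : c ∈ U) : IB ℓ U ⊆ IB ℓ (Up ℓ U c) := by
  intro i hi
  obtain ⟨B, hB⟩ := mem_IB.1 hi
  refine mem_IB.2 ⟨B - ℓ i c, ?_⟩
  rintro w ⟨x, hx, rfl⟩
  have h1 : ℓ i (c + x) ≤ B := hB ⟨c + x, hx.2, rfl⟩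
  rw [map_add] at h1
  linarith

lemma sum_bdd {ℓ : Fin m → ((Fin n → ℝ) →ₗ[ℝ] ℝ)} {U : Set (Fin n → ℝ)} :
    ∀ S : Finset (Fin m), (∀ i ∈ S, BddAbove (ℓ i '' U)) →
      BddAbove ((∑ i ∈ S, ℓ i : (Fin n → ℝ) →ₗ[ℝ] ℝ) '' U) := by
  classical
  intro S
  induction S using Finset.induction_on with
  | empty =>
    intro _
    refine ⟨0, ?_⟩
    rintro w ⟨x, _, rfl⟩
    simp
  | @insert a S haS IH =>
    intro h
    obtain ⟨B₁, hB₁⟩ := h a (Finset.mem_insert_self a S)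
    obtain ⟨B₂, hB₂⟩ := IH (fun i hi => h i (Finset.mem_insert_of_mem hi))
    refine ⟨B₁ + B₂, ?_⟩
    rintro w ⟨x, hx, rfl⟩
    rw [Finset.sum_insert haS]
    have h1 : ℓ a x ≤ B₁ := hB₁ ⟨x, hx, rfl⟩
    have h2 : (∑ i ∈ S, ℓ i : (Fin n → ℝ) →ₗ[ℝ] ℝ) x ≤ B₂ := hB₂ ⟨x, hx, rfl⟩
    rw [LinearMap.add_apply]
    linarith

/-- Core case: every unbounded functional stays unbounded on every upset. -/
lemma MLcore (ℓ : Fin m → ((Fin n → ℝ) →ₗ[ℝ] ℝ))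
    (hptd : ∀ x ∈ Pc ℓ, (∀ i, ℓ i x = 0) → x = 0)
    {U : Set (Fin n → ℝ)} (hU : DS ℓ U) (h0 : (0 : Fin n → ℝ) ∈ U)
    (hA : ∀ c ∈ U, ∀ i, i ∉ IB ℓ U → ¬ BddAbove (ℓ i '' Up ℓ U c)) :
    ∃ g ∈ U, Up ℓ U g = {x | x ∈ Pc ℓ ∧ ∀ i ∈ IB ℓ U, ℓ i x = 0} := by
  classical
  set I := IB ℓ U with hIdef
  set ψ : (Fin n → ℝ) →ₗ[ℝ] ℝ := ∑ i ∈ I, ℓ i with hψdef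
  have hψapp : ∀ x, ψ x = ∑ i ∈ I, ℓ i x := fun x => by
    rw [hψdef]; simp [LinearMap.sum_apply]
  have hbdd : BddAbove (ψ '' U) := sum_bdd I (fun i hi => mem_IB.1 hi)
  obtain ⟨g₀, hg₀U, hg₀max⟩ := lemX ℓ hptd ψ m ∅ U hU ⟨0, h0⟩ (by simp) hbdd (by simp)
  refine ⟨g₀, hg₀U, ?_⟩
  have hVsub : ∀ c ∈ Up ℓ U g₀, ∀ i ∈ I, ℓ i c = 0 := by
    intro c hc
    have h1 : ψ (g₀ + c) ≤ ψ g₀ := hg₀max _ hc.2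
    rw [map_add] at h1
    have h2 : ∑ i ∈ I, ℓ i c ≤ 0 := by rw [← hψapp]; linarith
    have h4 : ∑ i ∈ I, ℓ i c = 0 :=
      le_antisymm h2 (Finset.sum_nonneg fun i _ => hc.1 i)
    exact fun i hi => (Finset.sum_eq_zero_iff_of_nonneg (fun i _ => hc.1 i)).1 h4 i hi
  apply Set.Subset.antisymm
  · intro c hc
    exact ⟨hc.1, hVsub c hc⟩
  · rintro s ⟨hsPc, hsI⟩
    have hbuild : ∀ T : Finset (Fin m), ∃ u ∈ Up ℓ U g₀, ∀ j ∈ T, j ∉ I → ℓ j s ≤ ℓ j u := by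
      intro T
      induction T using Finset.induction_on with
      | empty => exact ⟨0, Up_zero_mem hg₀U, by simp⟩
      | @insert j T hjT IHT =>
        obtain ⟨u, huV, huT⟩ := IHT
        by_cases hjI : j ∈ I
        · refine ⟨u, huV, ?_⟩
          intro j' hj' hj'I
          rcases Finset.mem_insert.1 hj' with rfl | hj'T
          · exact absurd hjI hj'I
          · exact huT j' hj'T hj'I
        · have hunb : ¬ BddAbove (ℓ j '' Up ℓ U (g₀ + u)) := hA (g₀ + u) huV.2 j hjI
          obtain ⟨w', hw'mem, hw'⟩ := not_bddAbove_iff.1 hunb (ℓ j s)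
          obtain ⟨w, hwmem, rfl⟩ := hw'mem
          refine ⟨u + w, ⟨Pc_add huV.1 hwmem.1, by rw [← add_assoc]; exact hwmem.2⟩, ?_⟩
          intro j' hj' hj'I
          rcases Finset.mem_insert.1 hj' with rfl | hj'T
          · rw [map_add]
            have := huV.1 j'
            linarith [le_of_lt hw']
          · rw [map_add]
            have h1 := huT j' hj'T hj'I
            have h2 := hwmem.1 j'
            linarith
    obtain ⟨u, huV, hu⟩ := hbuild Finset.univ
    have husub : u - s ∈ Pc ℓ := by
      intro i
      rw [map_sub]
      by_cases hiI : i ∈ I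
      · rw [hVsub u huV i hiI, hsI i hiI]; simp
      · have := hu i (Finset.mem_univ i) hiI; linarith
    refine ⟨hsPc, ?_⟩
    have hmem := hU.dn (g₀ + u) huV.2 (g₀ + s) (Pc_add (hU.sub hg₀U) hsPc) ?_
    · exact hmem
    · have heq : g₀ + u - (g₀ + s) = u - s := by ring
      rw [heq]; exact husub

/-- Main lemma: some upset of a closed downset is a face. -/
lemma ML (ℓ : Fin m → ((Fin n → ℝ) →ₗ[ℝ] ℝ))
    (hptd : ∀ x ∈ Pc ℓ, (∀ i, ℓ i x = 0) → x = 0) :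
    ∀ (k : ℕ) (U : Set (Fin n → ℝ)), DS ℓ U → (0 : Fin n → ℝ) ∈ U →
      m ≤ k + (IB ℓ U).card →
      ∃ g ∈ U, ∃ I : Finset (Fin m),
        Up ℓ U g = {x | x ∈ Pc ℓ ∧ ∀ i ∈ I, ℓ i x = 0} := by
  intro k
  induction k with
  | zero =>
    intro U hU h0 hcard
    by_cases hA : ∃ c ∈ U, ∃ i, i ∉ IB ℓ U ∧ BddAbove (ℓ i '' Up ℓ U c)
    · exfalso
      obtain ⟨c, hc, i, hi, hbddi⟩ := hA
      have hcc : (IB ℓ U).card = Fintype.card (Fin m) := by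
        have h1 : (IB ℓ U).card ≤ Fintype.card (Fin m) := (IB ℓ U).card_le_univ
        simp only [Fintype.card_fin] at h1 ⊢
        omega
      exact hi ((Finset.eq_univ_of_card _ hcc) ▸ Finset.mem_univ i)
    · push_neg at hA
      obtain ⟨g, hg, hface⟩ := MLcore ℓ hptd hU h0 hA
      exact ⟨g, hg, IB ℓ U, hface⟩
  | succ k IH =>
    intro U hU h0 hcard
    by_cases hA : ∃ c ∈ U, ∃ i, i ∉ IB ℓ U ∧ BddAbove (ℓ i '' Up ℓ U c)
    · obtain ⟨c, hc, i, hi, hbddi⟩ := hA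
      have hss : IB ℓ U ⊂ IB ℓ (Up ℓ U c) :=
        (Finset.ssubset_iff_of_subset (IB_mono_Up hc)).2 ⟨i, mem_IB.2 hbddi, hi⟩
      have hlt : (IB ℓ U).card < (IB ℓ (Up ℓ U c)).card := Finset.card_lt_card hss
      obtain ⟨g', hg', I, hI⟩ := IH (Up ℓ U c) (DS_Up hU (hU.sub hc)) (Up_zero_mem hc)
        (by omega)
      refine ⟨c + g', hg'.2, I, ?_⟩
      rw [← Up_Up hg'.1]
      exact hI
    · push_neg at hA
      obtain ⟨g, hg, hface⟩ := MLcore ℓ hptd hU h0 hA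
      exact ⟨g, hg, IB ℓ U, hface⟩


end CogenAux

open CogenAux in
/-- If the part of `D` above `b ∈ D` is closed, then `b` precedes a closed
cogenerator of `D` along some face `τ`. -/
theorem exists_closed_cogenerator_above {n : ℕ} (C D : Set (Fin n → ℝ))
    (hC : IsPolyCone C) (hpointed : C ∩ (-C) = {0}) (hspan : C - C = Set.univ)
    (hD : IsDownset C D) (b : Fin n → ℝ) (hb : b ∈ D)
    (hclosed : ({b} + C) ∩ D = ({b} + C) ∩ closure D) :
    ∃ (τ : Set (Fin n → ℝ)) (a : Fin n → ℝ), IsConeFace τ C ∧ a ∈ D ∧ a - b ∈ C ∧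
      ({a} + C) ∩ D = {a} + τ := by
  obtain ⟨m, ℓ, hCeq⟩ := hC
  subst hCeq
  have hptd : ∀ x ∈ Pc ℓ, (∀ i, ℓ i x = 0) → x = 0 := by
    intro x hx h0
    have hmem : x ∈ ({x | ∀ i, 0 ≤ ℓ i x} : Set (Fin n → ℝ)) ∩ (-{x | ∀ i, 0 ≤ ℓ i x}) := by
      refine ⟨hx, ?_⟩
      rw [Set.mem_neg]
      intro i
      rw [map_neg, h0 i]
      simp
    rw [hpointed] at hmem
    exact hmem
  set G : Set (Fin n → ℝ) := {c | c ∈ Pc ℓ ∧ b + c ∈ D} with hGdef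
  have hmemG : ∀ c ∈ Pc ℓ, b + c ∈ ({b} + {x | ∀ i, 0 ≤ ℓ i x} : Set (Fin n → ℝ)) := by
    intro c hc
    rw [Set.singleton_add]
    exact ⟨c, hc, rfl⟩
  have hGDS : DS ℓ G := by
    refine ⟨fun c hc => hc.1, ?_, ?_⟩
    · have hGeq : G = Pc ℓ ∩ (fun c => b + c) ⁻¹' closure D := by
        ext c
        constructor
        · rintro ⟨hc, hcD⟩
          exact ⟨hc, subset_closure hcD⟩
        · rintro ⟨hc, hcD⟩
          refine ⟨hc, ?_⟩
          have : b + c ∈ ({b} + {x | ∀ i, 0 ≤ ℓ i x} : Set (Fin n → ℝ)) ∩ closure D :=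
            ⟨hmemG c hc, hcD⟩
          rw [← hclosed] at this
          exact this.2
      rw [hGeq]
      exact (isClosed_Pc ℓ).inter (isClosed_closure.preimage
        (continuous_const.add continuous_id))
    · intro x hx y hy hxy
      refine ⟨hy, hD (b + y) (b + x) hx.2 ?_⟩
      have : b + x - (b + y) = x - y := by ring
      rw [this]
      exact hxy
  have h0G : (0 : Fin n → ℝ) ∈ G := ⟨Pc_zero ℓ, by simpa using hb⟩
  obtain ⟨g, hgG, I, hface⟩ := ML ℓ hptd m G hGDS h0G (Nat.le_add_right _ _)
  set τ : Set (Fin n → ℝ) := {x | x ∈ Pc ℓ ∧ ∀ i ∈ I, ℓ i x = 0} with hτdef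
  refine ⟨τ, b + g, ?_, hgG.2, ?_, ?_⟩
  · -- τ is a face
    refine ⟨fun x hx => hx.1, ⟨Pc_zero ℓ, by simp⟩, ?_, ?_⟩
    · intro x hx y hy
      refine ⟨Pc_add hx.1 hy.1, ?_⟩
      intro i hi
      rw [map_add, hx.2 i hi, hy.2 i hi, add_zero]
    · intro x hx y hy hxy
      have hx' : x ∈ Pc ℓ := hx
      have hy' : y ∈ Pc ℓ := hy
      have hzero : ∀ i ∈ I, ℓ i x = 0 ∧ ℓ i y = 0 := by
        intro i hi
        have hsum := hxy.2 i hi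
        rw [map_add] at hsum
        have h1 := hx' i
        have h2 := hy' i
        constructor <;> linarith
      exact ⟨⟨hx', fun i hi => (hzero i hi).1⟩, ⟨hy', fun i hi => (hzero i hi).2⟩⟩
  · -- a - b ∈ C
    have : b + g - b = g := by ring
    rw [this]
    exact hgG.1
  · -- the set equality
    rw [Set.singleton_add, Set.singleton_add]
    ext x
    constructor
    · rintro ⟨⟨c, hc, rfl⟩, hxD⟩
      refine ⟨c, ?_, rfl⟩
      have hcUp : c ∈ Up ℓ G g := by
        refine ⟨hc, Pc_add hgG.1 hc, ?_⟩
        rw [← add_assoc]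
        exact hxD
      rw [hface] at hcUp
      exact hcUp
    · rintro ⟨c, hcτ, rfl⟩
      have hcUp : c ∈ Up ℓ G g := by rw [hface]; exact hcτ
      refine ⟨⟨c, hcτ.1, rfl⟩, ?_⟩
      have := hcUp.2.2
      rwa [← add_assoc] at this
end

section
/- Let C be a pointed, spanning polyhedral cone in E = ℝⁿ and let D ⊆ E be a downset. For every b ∈ D there exist faces τ ⊆ σ of C and a point a ∈ E with b ≼ a such that a is a cogenerator of D along τ with nadir σ, i.e., (a + C) ∩ D^σ = a + τ where D^σ := {x ∈ E | x − σ° ⊆ D}, and no face σ'' of C with τ ⊆ σ'' ⊊ σ satisfies a − σ''° ⊆ D. -/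
open Pointwise

namespace CogenProof

open scoped Classical

variable {n m : ℕ}

def CSet (ℓ : Fin m → ((Fin n → ℝ) →ₗ[ℝ] ℝ)) (S : Finset (Fin m)) : Set (Fin n → ℝ) :=
  {x | (∀ i, 0 ≤ ℓ i x) ∧ ∀ i ∈ S, ℓ i x = 0}

noncomputable def satF (ℓ : Fin m → ((Fin n → ℝ) →ₗ[ℝ] ℝ)) (S : Finset (Fin m)) :
    Finset (Fin m) :=
  Finset.univ.filter fun i => ∀ x ∈ CSet ℓ S, ℓ i x = 0

def RSet (ℓ : Fin m → ((Fin n → ℝ) →ₗ[ℝ] ℝ)) (S : Finset (Fin m)) : Set (Fin n → ℝ) :=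
  {x | (∀ i ∈ satF ℓ S, ℓ i x = 0) ∧ ∀ i, i ∉ satF ℓ S → 0 < ℓ i x}

variable (ℓ : Fin m → ((Fin n → ℝ) →ₗ[ℝ] ℝ))

lemma CSet_zero (S : Finset (Fin m)) : (0 : Fin n → ℝ) ∈ CSet ℓ S :=
  ⟨fun i => by simp, fun i _ => by simp⟩

lemma CSet_add {S : Finset (Fin m)} {x y : Fin n → ℝ} (hx : x ∈ CSet ℓ S)
    (hy : y ∈ CSet ℓ S) : x + y ∈ CSet ℓ S := by
  refine ⟨fun i => ?_, fun i hi => ?_⟩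
  · have := hx.1 i; have := hy.1 i; simp only [map_add]; linarith
  · simp only [map_add, hx.2 i hi, hy.2 i hi, add_zero]

lemma CSet_smul {S : Finset (Fin m)} {x : Fin n → ℝ} {t : ℝ} (ht : 0 ≤ t)
    (hx : x ∈ CSet ℓ S) : t • x ∈ CSet ℓ S := by
  refine ⟨fun i => ?_, fun i hi => ?_⟩
  · have := hx.1 i; simp only [map_smul, smul_eq_mul]; positivity
  · simp only [map_smul, smul_eq_mul, hx.2 i hi, mul_zero]

lemma CSet_antitone {S T : Finset (Fin m)} (h : S ⊆ T) : CSet ℓ T ⊆ CSet ℓ S :=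
  fun x hx => ⟨hx.1, fun i hi => hx.2 i (h hi)⟩

lemma cone_eq_CSet_empty : {x : Fin n → ℝ | ∀ i, 0 ≤ ℓ i x} = CSet ℓ ∅ := by
  ext x; exact ⟨fun h => ⟨h, fun i hi => absurd hi (by simp)⟩, fun h => h.1⟩

lemma mem_satF {S : Finset (Fin m)} {i : Fin m} :
    i ∈ satF ℓ S ↔ ∀ x ∈ CSet ℓ S, ℓ i x = 0 := by
  simp [satF]

lemma subset_satF (S : Finset (Fin m)) : S ⊆ satF ℓ S :=
  fun i hi => (mem_satF ℓ).mpr fun x hx => hx.2 i hi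

lemma CSet_satF (S : Finset (Fin m)) : CSet ℓ (satF ℓ S) = CSet ℓ S := by
  apply Set.Subset.antisymm (CSet_antitone ℓ (subset_satF ℓ S))
  intro x hx
  exact ⟨hx.1, fun i hi => (mem_satF ℓ).mp hi x hx⟩

lemma satF_anti {A B : Finset (Fin m)} (h : CSet ℓ B ⊆ CSet ℓ A) :
    satF ℓ A ⊆ satF ℓ B :=
  fun i hi => (mem_satF ℓ).mpr fun x hx => (mem_satF ℓ).mp hi x (h hx)

lemma satF_congr {A B : Finset (Fin m)} (h : CSet ℓ A = CSet ℓ B) :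
    satF ℓ A = satF ℓ B :=
  Finset.Subset.antisymm (satF_anti ℓ h.ge) (satF_anti ℓ h.le)

lemma satF_idem (S : Finset (Fin m)) : satF ℓ (satF ℓ S) = satF ℓ S :=
  satF_congr ℓ (CSet_satF ℓ S)

lemma RSet_satF (S : Finset (Fin m)) : RSet ℓ (satF ℓ S) = RSet ℓ S := by
  unfold RSet; rw [satF_idem]

lemma RSet_subset_CSet (S : Finset (Fin m)) : RSet ℓ S ⊆ CSet ℓ S := by
  intro x hx
  refine ⟨fun i => ?_, fun i hi => hx.1 i (subset_satF ℓ S hi)⟩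
  by_cases hi : i ∈ satF ℓ S
  · exact (hx.1 i hi).ge
  · exact (hx.2 i hi).le

lemma RSet_smul {S : Finset (Fin m)} {x : Fin n → ℝ} {t : ℝ} (ht : 0 < t)
    (hx : x ∈ RSet ℓ S) : t • x ∈ RSet ℓ S := by
  refine ⟨fun i hi => ?_, fun i hi => ?_⟩
  · simp [map_smul, hx.1 i hi]
  · have := hx.2 i hi; simp only [map_smul, smul_eq_mul]; positivity

lemma exists_eps (F : Finset (Fin m)) (f g : Fin m → ℝ) (hf : ∀ i ∈ F, 0 < f i) :
    ∃ ε : ℝ, 0 < ε ∧ ∀ i ∈ F, ε * g i < f i := by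
  by_cases hF : F.Nonempty
  · refine ⟨min 1 (F.inf' hF fun i => f i / (|g i| + 1)), ?_, ?_⟩
    · refine lt_min one_pos ?_
      rw [Finset.lt_inf'_iff]
      intro i hi
      have := hf i hi
      positivity
    · intro i hi
      set ε := min 1 (F.inf' hF fun i => f i / (|g i| + 1)) with hε
      have hε0 : 0 < ε := by
        refine lt_min one_pos ?_
        rw [Finset.lt_inf'_iff]
        intro j hj
        have := hf j hj
        positivity
      have h1 : ε ≤ f i / (|g i| + 1) := (min_le_right _ _).trans (Finset.inf'_le _ hi)
      have h2 : ε * g i ≤ ε * |g i| :=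
        mul_le_mul_of_nonneg_left (le_abs_self _) hε0.le
      have h3 : ε * |g i| ≤ (f i / (|g i| + 1)) * |g i| :=
        mul_le_mul_of_nonneg_right h1 (abs_nonneg _)
      have h4 : (f i / (|g i| + 1)) * |g i| < f i := by
        rw [div_mul_eq_mul_div, div_lt_iff₀ (by positivity)]
        have := hf i hi
        nlinarith [abs_nonneg (g i)]
      linarith
  · exact ⟨1, one_pos, fun i hi => absurd ⟨i, hi⟩ hF⟩

lemma exists_tee (F : Finset (Fin m)) (f g : Fin m → ℝ) (hf : ∀ i ∈ F, 0 < f i) :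
    ∃ t : ℝ, 0 < t ∧ ∀ i ∈ F, g i < t * f i := by
  obtain ⟨ε, hε, h⟩ := exists_eps F f g hf
  refine ⟨ε⁻¹, by positivity, fun i hi => ?_⟩
  have h1 := h i hi
  rw [inv_mul_eq_div, lt_div_iff₀ hε]
  linarith [h i hi]

lemma exists_RSet (S : Finset (Fin m)) : ∃ z, z ∈ RSet ℓ S := by
  have hz : ∀ i, i ∉ satF ℓ S → ∃ x, x ∈ CSet ℓ S ∧ 0 < ℓ i x := by
    intro i hi
    have h1 : ¬ ∀ x ∈ CSet ℓ S, ℓ i x = 0 := fun h => hi ((mem_satF ℓ).mpr h)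
    push_neg at h1
    obtain ⟨x, hx, hne⟩ := h1
    exact ⟨x, hx, lt_of_le_of_ne (hx.1 i) (Ne.symm hne)⟩
  set g : Fin m → (Fin n → ℝ) := fun i =>
    if h : i ∉ satF ℓ S then (hz i h).choose else 0 with hg
  have hgC : ∀ i, g i ∈ CSet ℓ S := by
    intro i
    by_cases h : i ∉ satF ℓ S
    · simp only [hg, dif_pos h]; exact (hz i h).choose_spec.1
    · simp only [hg, dif_neg h]; exact CSet_zero ℓ S
  have hgpos : ∀ i, i ∉ satF ℓ S → 0 < ℓ i (g i) := by
    intro i h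
    simp only [hg, dif_pos h]
    exact (hz i h).choose_spec.2
  refine ⟨∑ i ∈ Finset.univ \ satF ℓ S, g i, ?_, ?_⟩
  · intro j hj
    rw [map_sum]
    exact Finset.sum_eq_zero fun i _ => (mem_satF ℓ).mp hj (g i) (hgC i)
  · intro j hj
    rw [map_sum]
    have hmem : j ∈ Finset.univ \ satF ℓ S := Finset.mem_sdiff.mpr ⟨Finset.mem_univ j, hj⟩
    have := Finset.single_le_sum (f := fun i => ℓ j (g i))
      (fun i _ => (hgC i).1 j) hmem
    exact lt_of_lt_of_le (hgpos j hj) this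

lemma isConeFace_CSet (S : Finset (Fin m)) :
    IsConeFace (CSet ℓ S) {x : Fin n → ℝ | ∀ i, 0 ≤ ℓ i x} := by
  refine ⟨fun x hx => hx.1, CSet_zero ℓ S, fun x hx y hy => CSet_add ℓ hx hy, ?_⟩
  intro x hx y hy hxy
  have key : ∀ i ∈ S, ℓ i x = 0 ∧ ℓ i y = 0 := by
    intro i hi
    have h0 := hxy.2 i hi
    rw [map_add] at h0
    have h1 := hx i; have h2 := hy i
    constructor <;> linarith
  exact ⟨⟨hx, fun i hi => (key i hi).1⟩, ⟨hy, fun i hi => (key i hi).2⟩⟩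

lemma cone_smul {x : Fin n → ℝ} (hx : ∀ i, 0 ≤ ℓ i x) {t : ℝ} (ht : 0 ≤ t) :
    ∀ i, 0 ≤ ℓ i (t • x) := by
  intro i; have := hx i; simp only [map_smul, smul_eq_mul]; positivity

lemma face_smul {σ : Set (Fin n → ℝ)}
    (hσ : IsConeFace σ {x : Fin n → ℝ | ∀ i, 0 ≤ ℓ i x}) {x : Fin n → ℝ}
    (hx : x ∈ σ) {t : ℝ} (ht : 0 ≤ t) : t • x ∈ σ := by
  obtain ⟨hsub, h0, hadd, hsplit⟩ := hσ
  have step1 : ∀ u ∈ σ, ∀ s : ℝ, 0 ≤ s → s ≤ 1 → s • u ∈ σ := by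
    intro u hu s hs0 hs1
    have hu' : ∀ i, 0 ≤ ℓ i u := hsub hu
    have h1 : s • u ∈ {x : Fin n → ℝ | ∀ i, 0 ≤ ℓ i x} := cone_smul ℓ hu' hs0
    have h2 : (1 - s) • u ∈ {x : Fin n → ℝ | ∀ i, 0 ≤ ℓ i x} :=
      cone_smul ℓ hu' (by linarith)
    have h3 : s • u + (1 - s) • u ∈ σ := by
      rw [← add_smul]
      simpa using hu
    exact (hsplit _ h1 _ h2 h3).1
  have step2 : ∀ k : ℕ, (k : ℝ) • x ∈ σ := by
    intro k
    induction k with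
    | zero => simpa using h0
    | succ k ihk =>
      have : ((k : ℝ) + 1) • x = (k : ℝ) • x + x := by
        rw [add_smul, one_smul]
      push_cast
      rw [this]
      exact hadd _ ihk _ hx
  set k : ℕ := ⌈t⌉₊ + 1 with hk
  have hkpos : (0 : ℝ) < (k : ℝ) := by positivity
  have htk : t ≤ (k : ℝ) := by
    have := Nat.le_ceil t
    have : (⌈t⌉₊ : ℝ) ≤ (k : ℝ) := by rw [hk]; push_cast; linarith
    linarith [Nat.le_ceil t]
  have h5 : (t / (k : ℝ)) • ((k : ℝ) • x) ∈ σ :=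
    step1 _ (step2 k) _ (by positivity) (div_le_one_of_le₀ htk hkpos.le)
  rwa [smul_smul, div_mul_cancel₀ _ hkpos.ne'] at h5

noncomputable def satOf (σ : Set (Fin n → ℝ)) : Finset (Fin m) :=
  Finset.univ.filter fun i => ∀ x ∈ σ, ℓ i x = 0

lemma mem_satOf {σ : Set (Fin n → ℝ)} {i : Fin m} :
    i ∈ satOf ℓ σ ↔ ∀ x ∈ σ, ℓ i x = 0 := by simp [satOf]

lemma face_eq_CSet {σ : Set (Fin n → ℝ)}
    (hσ : IsConeFace σ {x : Fin n → ℝ | ∀ i, 0 ≤ ℓ i x}) : σ = CSet ℓ (satOf ℓ σ) := by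
  apply Set.Subset.antisymm
  · intro x hx
    exact ⟨hσ.1 hx, fun i hi => (mem_satOf ℓ).mp hi x hx⟩
  · intro x hx
    -- build z ∈ σ with ℓ i z > 0 for all i ∉ satOf σ
    have hz : ∀ i, i ∉ satOf ℓ σ → ∃ u, u ∈ σ ∧ 0 < ℓ i u := by
      intro i hi
      have h1 : ¬ ∀ u ∈ σ, ℓ i u = 0 := fun h => hi ((mem_satOf ℓ).mpr h)
      push_neg at h1
      obtain ⟨u, hu, hne⟩ := h1
      exact ⟨u, hu, lt_of_le_of_ne (hσ.1 hu i) (Ne.symm hne)⟩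
    set g : Fin m → (Fin n → ℝ) := fun i =>
      if h : i ∉ satOf ℓ σ then (hz i h).choose else 0 with hg
    have hgσ : ∀ i, g i ∈ σ := by
      intro i
      by_cases h : i ∉ satOf ℓ σ
      · simp only [hg, dif_pos h]; exact (hz i h).choose_spec.1
      · simp only [hg, dif_neg h]; exact hσ.2.1
    have hgpos : ∀ i, i ∉ satOf ℓ σ → 0 < ℓ i (g i) := by
      intro i h; simp only [hg, dif_pos h]; exact (hz i h).choose_spec.2
    set z : Fin n → ℝ := ∑ i ∈ Finset.univ \ satOf ℓ σ, g i with hzdef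
    have hzσ : z ∈ σ := by
      rw [hzdef]
      exact Finset.sum_induction g (· ∈ σ) (fun a b ha hb => hσ.2.2.1 a ha b hb) hσ.2.1
        (fun i _ => hgσ i)
    have hzpos : ∀ i, i ∉ satOf ℓ σ → 0 < ℓ i z := by
      intro j hj
      rw [hzdef, map_sum]
      have hmem : j ∈ Finset.univ \ satOf ℓ σ := Finset.mem_sdiff.mpr ⟨Finset.mem_univ j, hj⟩
      have := Finset.single_le_sum (f := fun i => ℓ j (g i))
        (fun i _ => hσ.1 (hgσ i) j) hmem
      exact lt_of_lt_of_le (hgpos j hj) this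
    obtain ⟨ε, hε, hεlt⟩ := exists_eps (Finset.univ \ satOf ℓ σ)
      (fun i => ℓ i z) (fun i => ℓ i x) (fun i hi => hzpos i (Finset.mem_sdiff.mp hi).2)
    have hy : z - ε • x ∈ {x : Fin n → ℝ | ∀ i, 0 ≤ ℓ i x} := by
      intro i
      by_cases hi : i ∈ satOf ℓ σ
      · have h1 : ℓ i z = 0 := (mem_satOf ℓ).mp hi z hzσ
        have h2 : ℓ i x = 0 := hx.2 i hi
        simp [map_sub, map_smul, h1, h2]
      · have := hεlt i (Finset.mem_sdiff.mpr ⟨Finset.mem_univ i, hi⟩)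
        simp only [map_sub, map_smul, smul_eq_mul, Set.mem_setOf_eq]
        linarith
    have hεx : ε • x ∈ {x : Fin n → ℝ | ∀ i, 0 ≤ ℓ i x} := cone_smul ℓ hx.1 hε.le
    have hsum : (z - ε • x) + ε • x ∈ σ := by
      rw [sub_add_cancel]; exact hzσ
    have hεxσ : ε • x ∈ σ := (hσ.2.2.2 _ hy _ hεx hsum).2
    have := face_smul ℓ hσ hεxσ (t := ε⁻¹) (by positivity)
    rwa [smul_smul, inv_mul_cancel₀ hε.ne', one_smul] at this

lemma affineSpan_CSet (S : Finset (Fin m)) :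
    (affineSpan ℝ (CSet ℓ S) : Set (Fin n → ℝ)) = {x | ∀ i ∈ satF ℓ S, ℓ i x = 0} := by
  apply Set.Subset.antisymm
  · set K : Submodule ℝ (Fin n → ℝ) := ⨅ i ∈ satF ℓ S, LinearMap.ker (ℓ i) with hK
    have hmemK : ∀ x : Fin n → ℝ, x ∈ K ↔ ∀ i ∈ satF ℓ S, ℓ i x = 0 := by
      intro x
      simp [hK, Submodule.mem_iInf, LinearMap.mem_ker]
    have hle : affineSpan ℝ (CSet ℓ S) ≤ K.toAffineSubspace := by
      rw [affineSpan_le]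
      intro x hx
      rw [SetLike.mem_coe, Submodule.mem_toAffineSubspace, hmemK]
      intro i hi
      exact (mem_satF ℓ).mp hi x hx
    intro x hx
    have := hle hx
    rw [Submodule.mem_toAffineSubspace, hmemK] at this
    exact this
  · intro x hx
    obtain ⟨z, hz⟩ := exists_RSet ℓ S
    obtain ⟨ε, hε, hεlt⟩ := exists_eps (Finset.univ \ satF ℓ S)
      (fun i => ℓ i z) (fun i => -(ℓ i x))
      (fun i hi => hz.2 i (Finset.mem_sdiff.mp hi).2)
    have hp : z + ε • x ∈ CSet ℓ S := by
      refine ⟨fun i => ?_, fun i hi => ?_⟩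
      · by_cases hi : i ∈ satF ℓ S
        · simp [map_add, map_smul, hz.1 i hi, hx i hi]
        · have := hεlt i (Finset.mem_sdiff.mpr ⟨Finset.mem_univ i, hi⟩)
          simp only [map_add, map_smul, smul_eq_mul]
          linarith
      · have h1 := hz.1 i (subset_satF ℓ S hi)
        have h2 := hx i (subset_satF ℓ S hi)
        simp [map_add, map_smul, h1, h2]
    have hmem := AffineSubspace.smul_vsub_vadd_mem (affineSpan ℝ (CSet ℓ S)) ε⁻¹
      (subset_affineSpan ℝ _ hp) (subset_affineSpan ℝ _ (RSet_subset_CSet ℓ S hz))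
      (subset_affineSpan ℝ _ (CSet_zero ℓ S))
    have heq : ε⁻¹ • ((z + ε • x) -ᵥ z) +ᵥ (0 : Fin n → ℝ) = x := by
      rw [vsub_eq_sub, vadd_eq_add, add_zero, add_sub_cancel_left, smul_smul,
        inv_mul_cancel₀ hε.ne', one_smul]
    rw [heq] at hmem
    exact hmem

lemma intrinsicInterior_CSet (S : Finset (Fin m)) :
    intrinsicInterior ℝ (CSet ℓ S) = RSet ℓ S := by
  apply Set.Subset.antisymm
  · rintro x ⟨xh, hxh, rfl⟩
    have hxC : (xh : Fin n → ℝ) ∈ CSet ℓ S :=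
      intrinsicInterior_subset ⟨xh, hxh, rfl⟩
    refine ⟨fun i hi => (mem_satF ℓ).mp hi _ hxC, fun i hi => ?_⟩
    by_contra hle
    push_neg at hle
    have heq : ℓ i (xh : Fin n → ℝ) = 0 := le_antisymm hle (hxC.1 i)
    obtain ⟨z, hz⟩ := exists_RSet ℓ S
    have hmem : ∀ t : ℝ, ((xh : Fin n → ℝ) - t • z) ∈ affineSpan ℝ (CSet ℓ S) := by
      intro t
      have h1 : ((xh : Fin n → ℝ) - t • z) ∈ (affineSpan ℝ (CSet ℓ S) : Set (Fin n → ℝ)) := by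
        rw [affineSpan_CSet]
        intro j hj
        have hx2 : (xh : Fin n → ℝ) ∈ (affineSpan ℝ (CSet ℓ S) : Set (Fin n → ℝ)) := xh.2
        rw [affineSpan_CSet] at hx2
        simp [map_sub, map_smul, hx2 j hj, hz.1 j hj]
      exact h1
    set f : ℝ → (affineSpan ℝ (CSet ℓ S)) := fun t => ⟨(xh : Fin n → ℝ) - t • z, hmem t⟩ with hf
    have hfc : Continuous f := by
      refine Continuous.subtype_mk ?_ _
      exact continuous_const.sub (continuous_id.smul continuous_const)
    have h0 : f 0 = xh := Subtype.ext (by simp [hf])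
    have hnhds : f ⁻¹' (interior ((↑) ⁻¹' CSet ℓ S : Set (affineSpan ℝ (CSet ℓ S)))) ∈ nhds (0 : ℝ) :=
      hfc.continuousAt.preimage_mem_nhds (isOpen_interior.mem_nhds (h0 ▸ hxh))
    obtain ⟨δ, hδ, hball⟩ := Metric.mem_nhds_iff.mp hnhds
    have hballmem : (δ/2 : ℝ) ∈ Metric.ball (0:ℝ) δ := by
      rw [Metric.mem_ball, Real.dist_eq, sub_zero, abs_of_pos (by linarith)]
      linarith
    have hin : f (δ/2) ∈ ((↑) ⁻¹' CSet ℓ S : Set (affineSpan ℝ (CSet ℓ S))) :=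
      interior_subset (hball hballmem)
    have hCS : ((xh : Fin n → ℝ) - (δ/2) • z) ∈ CSet ℓ S := hin
    have := hCS.1 i
    rw [map_sub, map_smul, heq, smul_eq_mul] at this
    have hzpos := hz.2 i hi
    nlinarith
  · intro x hx
    have hxC : x ∈ CSet ℓ S := RSet_subset_CSet ℓ S hx
    have hxA : x ∈ affineSpan ℝ (CSet ℓ S) := subset_affineSpan ℝ _ hxC
    refine ⟨⟨x, hxA⟩, ?_, rfl⟩
    set U : Set (affineSpan ℝ (CSet ℓ S)) :=
      ⋂ i ∈ (Finset.univ \ satF ℓ S),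
        ((fun y : (affineSpan ℝ (CSet ℓ S)) => ℓ i (y : Fin n → ℝ)) ⁻¹' Set.Ioi 0) with hU
    have hUopen : IsOpen U := by
      refine isOpen_biInter_finset fun i _ => ?_
      exact IsOpen.preimage
        (((ℓ i).continuous_of_finiteDimensional).comp continuous_subtype_val) isOpen_Ioi
    have hUsub : U ⊆ ((↑) ⁻¹' CSet ℓ S : Set (affineSpan ℝ (CSet ℓ S))) := by
      intro y hy
      have hyK : ∀ j ∈ satF ℓ S, ℓ j (y : Fin n → ℝ) = 0 := by
        have hy2 : (y : Fin n → ℝ) ∈ (affineSpan ℝ (CSet ℓ S) : Set (Fin n → ℝ)) := y.2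
        rw [affineSpan_CSet] at hy2
        exact hy2
      refine ⟨fun i => ?_, fun i hi => hyK i (subset_satF ℓ S hi)⟩
      by_cases hi : i ∈ satF ℓ S
      · exact (hyK i hi).ge
      · have := Set.mem_iInter₂.mp hy i (Finset.mem_sdiff.mpr ⟨Finset.mem_univ i, hi⟩)
        exact (Set.mem_Ioi.mp this).le
    have hxU : (⟨x, hxA⟩ : affineSpan ℝ (CSet ℓ S)) ∈ U := by
      rw [hU]
      refine Set.mem_iInter₂.mpr fun i hi => ?_
      exact Set.mem_Ioi.mpr (hx.2 i (Finset.mem_sdiff.mp hi).2)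
    exact interior_maximal hUsub hUopen hxU

variable (D : Set (Fin n → ℝ))

def UD (S : Finset (Fin m)) : Set (Fin n → ℝ) := {x | ∀ s ∈ RSet ℓ S, x - s ∈ D}

variable {ℓ D}

lemma D_sub (hD : IsDownset {x : Fin n → ℝ | ∀ i, 0 ≤ ℓ i x} D)
    {y : Fin n → ℝ} (hy : y ∈ D) {c : Fin n → ℝ}
    (hc : ∀ i, 0 ≤ ℓ i c) : y - c ∈ D := by
  refine hD (y - c) y hy ?_
  have : y - (y - c) = c := by abel
  rw [this]; exact hc

lemma UD_sub (hD : IsDownset {x : Fin n → ℝ | ∀ i, 0 ≤ ℓ i x} D)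
    {S : Finset (Fin m)} {x : Fin n → ℝ} (hx : x ∈ UD ℓ D S) {c : Fin n → ℝ}
    (hc : ∀ i, 0 ≤ ℓ i c) : x - c ∈ UD ℓ D S := by
  intro s hs
  have : x - c - s = (x - s) - c := by abel
  rw [this]
  exact D_sub hD (hy := hx s hs) (hc := hc)

lemma mem_UD_of_mem_D (hD : IsDownset {x : Fin n → ℝ | ∀ i, 0 ≤ ℓ i x} D)
    {S : Finset (Fin m)} {x : Fin n → ℝ} (hx : x ∈ D) : x ∈ UD ℓ D S := by
  intro s hs
  exact D_sub hD (hy := hx) (hc := (RSet_subset_CSet ℓ S hs).1)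

lemma UD_mono (hD : IsDownset {x : Fin n → ℝ | ∀ i, 0 ≤ ℓ i x} D)
    {A B : Finset (Fin m)} (h : satF ℓ B ⊆ satF ℓ A) : UD ℓ D A ⊆ UD ℓ D B := by
  intro x hx s hs
  obtain ⟨u, hu⟩ := exists_RSet ℓ A
  obtain ⟨ε, hε, hεlt⟩ := exists_eps (Finset.univ \ satF ℓ B)
    (fun i => ℓ i s) (fun i => ℓ i u) (fun i hi => hs.2 i (Finset.mem_sdiff.mp hi).2)
  have hs' : s - ε • u ∈ CSet ℓ B := by
    refine ⟨fun i => ?_, fun i hi => ?_⟩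
    · by_cases hi : i ∈ satF ℓ B
      · simp [map_sub, map_smul, hs.1 i hi, hu.1 i (h hi)]
      · have := hεlt i (Finset.mem_sdiff.mpr ⟨Finset.mem_univ i, hi⟩)
        simp only [map_sub, map_smul, smul_eq_mul, Set.mem_setOf_eq]
        linarith
    · have hi' := subset_satF ℓ B hi
      simp [map_sub, map_smul, hs.1 i hi', hu.1 i (h hi')]
  have h1 : x - ε • u ∈ D := hx _ (RSet_smul ℓ hε hu)
  have h2 : x - s = (x - ε • u) - (s - ε • u) := by abel
  rw [h2]
  exact D_sub hD (hy := h1) (hc := hs'.1)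

lemma UD_satF (S : Finset (Fin m)) : UD ℓ D (satF ℓ S) = UD ℓ D S := by
  unfold UD; rw [RSet_satF]

lemma ell_vanish (hspan : {x : Fin n → ℝ | ∀ i, 0 ≤ ℓ i x} -
    {x : Fin n → ℝ | ∀ i, 0 ≤ ℓ i x} = Set.univ) {i : Fin m} (hi : i ∈ satF ℓ (∅ : Finset (Fin m)))
    (v : Fin n → ℝ) : ℓ i v = 0 := by
  have hv : v ∈ ({x : Fin n → ℝ | ∀ i, 0 ≤ ℓ i x} - {x : Fin n → ℝ | ∀ i, 0 ≤ ℓ i x}) := by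
    rw [hspan]; trivial
  obtain ⟨p, hp, q, hq, rfl⟩ := hv
  have hp' : p ∈ CSet ℓ (∅ : Finset (Fin m)) := ⟨hp, fun i hi => absurd hi (by simp)⟩
  have hq' : q ∈ CSet ℓ (∅ : Finset (Fin m)) := ⟨hq, fun i hi => absurd hi (by simp)⟩
  rw [map_sub, (mem_satF ℓ).mp hi p hp', (mem_satF ℓ).mp hi q hq', sub_zero]

lemma RSet_empty_open (hspan : {x : Fin n → ℝ | ∀ i, 0 ≤ ℓ i x} -
    {x : Fin n → ℝ | ∀ i, 0 ≤ ℓ i x} = Set.univ) : IsOpen (RSet ℓ (∅ : Finset (Fin m))) := by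
  have : RSet ℓ (∅ : Finset (Fin m)) =
      ⋂ i ∈ (Finset.univ \ satF ℓ (∅ : Finset (Fin m))), (ℓ i) ⁻¹' Set.Ioi 0 := by
    ext y
    simp only [Set.mem_iInter, Set.mem_preimage, Set.mem_Ioi, Finset.mem_sdiff,
      Finset.mem_univ, true_and]
    constructor
    · rintro ⟨h1, h2⟩ i hi
      exact h2 i hi
    · intro h
      exact ⟨fun i hi => ell_vanish hspan hi y, fun i hi => h i hi⟩
  rw [this]
  exact isOpen_biInter_finset fun i _ =>
    IsOpen.preimage ((ℓ i).continuous_of_finiteDimensional) isOpen_Ioi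

lemma isClosed_UD_empty (hD : IsDownset {x : Fin n → ℝ | ∀ i, 0 ≤ ℓ i x} D) (hspan : {x : Fin n → ℝ | ∀ i, 0 ≤ ℓ i x} -
    {x : Fin n → ℝ | ∀ i, 0 ≤ ℓ i x} = Set.univ) : IsClosed (UD ℓ D (∅ : Finset (Fin m))) := by
  rw [← closure_subset_iff_isClosed]
  intro x hx s hs
  have hg : Continuous fun y : Fin n → ℝ => s - x + y := by continuity
  have hnhds : (fun y : Fin n → ℝ => s - x + y) ⁻¹' (RSet ℓ (∅ : Finset (Fin m))) ∈ nhds x := by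
    refine hg.continuousAt.preimage_mem_nhds ?_
    refine (RSet_empty_open hspan).mem_nhds ?_
    simpa using hs
  obtain ⟨y, hy1, hy2⟩ := mem_closure_iff_nhds.mp hx _ hnhds
  have heq : x - s = y - (s - x + y) := by abel
  rw [heq]
  exact hy2 _ hy1

noncomputable def alive (ℓ : Fin m → ((Fin n → ℝ) →ₗ[ℝ] ℝ)) (D : Set (Fin n → ℝ))
    (a : Fin n → ℝ) : Finset (Finset (Fin m)) :=
  Finset.univ.filter fun S => satF ℓ S = S ∧ ∃ c ∈ RSet ℓ S, a + c ∈ UD ℓ D (∅ : Finset (Fin m))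

lemma satF_univ : satF ℓ (Finset.univ : Finset (Fin m)) = Finset.univ :=
  Finset.eq_univ_iff_forall.mpr fun i => subset_satF ℓ _ (Finset.mem_univ i)

lemma zero_mem_RSet_univ : (0 : Fin n → ℝ) ∈ RSet ℓ (Finset.univ : Finset (Fin m)) := by
  refine ⟨fun i _ => by simp, fun i hi => ?_⟩
  rw [satF_univ] at hi
  exact absurd (Finset.mem_univ i) hi

lemma univ_mem_alive {D : Set (Fin n → ℝ)} {a : Fin n → ℝ}
    (ha : a ∈ UD ℓ D (∅ : Finset (Fin m))) : Finset.univ ∈ alive ℓ D a := by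
  refine Finset.mem_filter.mpr ⟨Finset.mem_univ _, satF_univ, 0, zero_mem_RSet_univ, ?_⟩
  simpa using ha

lemma partB_aux (hD : IsDownset {x : Fin n → ℝ | ∀ i, 0 ≤ ℓ i x} D)
    (hspan : {x : Fin n → ℝ | ∀ i, 0 ≤ ℓ i x} -
      {x : Fin n → ℝ | ∀ i, 0 ≤ ℓ i x} = Set.univ) : ∀ k : ℕ, ∀ a : Fin n → ℝ, a ∈ UD ℓ D (∅ : Finset (Fin m)) →
    (alive ℓ D a).card ≤ k →
    ∃ (a' : Fin n → ℝ) (S : Finset (Fin m)), satF ℓ S = S ∧ (∀ i, 0 ≤ ℓ i (a' - a)) ∧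
      a' ∈ UD ℓ D (∅ : Finset (Fin m)) ∧
      ∀ c : Fin n → ℝ, (∀ i, 0 ≤ ℓ i c) →
        (a' + c ∈ UD ℓ D (∅ : Finset (Fin m)) ↔ c ∈ CSet ℓ S) := by
  intro k
  induction k with
  | zero =>
    intro a ha hcard
    exfalso
    have := Finset.card_pos.mpr ⟨Finset.univ, univ_mem_alive ha⟩
    omega
  | succ k ih =>
    intro a ha hcard
    obtain ⟨S, hSmem, hSmin⟩ := Finset.exists_min_image (alive ℓ D a) Finset.card
      ⟨Finset.univ, univ_mem_alive ha⟩
    obtain ⟨-, hsat, c, hcR, hcUD⟩ := Finset.mem_filter.mp hSmem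
    have hcC : ∀ i, 0 ≤ ℓ i c := (RSet_subset_CSet ℓ S hcR).1
    set J : Set ℝ := {t | 0 ≤ t ∧ a + t • c ∈ UD ℓ D (∅ : Finset (Fin m))} with hJ
    have hJ0 : (0 : ℝ) ∈ J := ⟨le_refl 0, by simpa using ha⟩
    by_cases hB : BddAbove J
    · have hJclosed : IsClosed J := by
        have : J = Set.Ici (0:ℝ) ∩ ((fun t : ℝ => a + t • c) ⁻¹' UD ℓ D (∅ : Finset (Fin m))) := by
          ext t; simp [hJ, Set.mem_Ici]
        rw [this]
        exact isClosed_Ici.inter ((isClosed_UD_empty hD hspan).preimage (by continuity))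
      have hsup := hJclosed.csSup_mem ⟨0, hJ0⟩ hB
      set h : ℝ := sSup J with hh
      set a1 : Fin n → ℝ := a + h • c with ha1
      have hh0 : 0 ≤ h := hsup.1
      have ha1UD : a1 ∈ UD ℓ D (∅ : Finset (Fin m)) := hsup.2
      have hhc : ∀ i, 0 ≤ ℓ i (h • c) := by
        intro i; have := hcC i; simp only [map_smul, smul_eq_mul]; positivity
      have hmono : alive ℓ D a1 ⊆ alive ℓ D a := by
        intro T hT
        obtain ⟨-, hsatT, c', hc'R, hc'UD⟩ := Finset.mem_filter.mp hT
        refine Finset.mem_filter.mpr ⟨Finset.mem_univ _, hsatT, c', hc'R, ?_⟩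
        have heq : a + c' = (a1 + c') - h • c := by rw [ha1]; abel
        rw [heq]
        exact UD_sub hD hc'UD hhc
      have hSnot : S ∉ alive ℓ D a1 := by
        intro hmem
        obtain ⟨-, -, c', hc'R, hc'UD⟩ := Finset.mem_filter.mp hmem
        obtain ⟨ε, hε, hεlt⟩ := exists_eps (Finset.univ \ satF ℓ S)
          (fun i => ℓ i c') (fun i => ℓ i c)
          (fun i hi => hc'R.2 i (Finset.mem_sdiff.mp hi).2)
        have hkey : ∀ i, 0 ≤ ℓ i (c' - ε • c) := by
          intro i
          by_cases hi : i ∈ satF ℓ S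
          · simp [map_sub, map_smul, hc'R.1 i hi, hcR.1 i hi]
          · have := hεlt i (Finset.mem_sdiff.mpr ⟨Finset.mem_univ i, hi⟩)
            simp only [map_sub, map_smul, smul_eq_mul]
            linarith
        have hmem2 : a + (h + ε) • c ∈ UD ℓ D (∅ : Finset (Fin m)) := by
          have heq : a + (h + ε) • c = (a1 + c') - (c' - ε • c) := by
            rw [ha1, add_smul]; abel
          rw [heq]
          exact UD_sub hD hc'UD hkey
        have : h + ε ≤ h := le_csSup hB ⟨by linarith, hmem2⟩
        linarith
      have hcard1 : (alive ℓ D a1).card ≤ k := by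
        have hsub : alive ℓ D a1 ⊆ (alive ℓ D a).erase S := fun T hT =>
          Finset.mem_erase.mpr ⟨fun hTS => hSnot (hTS ▸ hT), hmono hT⟩
        have h1 := Finset.card_le_card hsub
        have h2 := Finset.card_erase_of_mem hSmem
        have h3 := Finset.card_pos.mpr ⟨S, hSmem⟩
        omega
      obtain ⟨a', S', hsat', hge', hUD', hiff'⟩ := ih a1 ha1UD hcard1
      refine ⟨a', S', hsat', ?_, hUD', hiff'⟩
      intro i
      have h1 := hge' i
      have h2 := hhc i
      have heq : a' - a = (a' - a1) + h • c := by rw [ha1]; abel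
      rw [heq, map_add]
      linarith
    · -- unbounded
      have hJall : ∀ t : ℝ, 0 ≤ t → a + t • c ∈ UD ℓ D (∅ : Finset (Fin m)) := by
        intro t ht
        obtain ⟨t', ht'J, htt'⟩ := not_bddAbove_iff.mp hB t
        have hkey : ∀ i, 0 ≤ ℓ i ((t' - t) • c) := by
          intro i; have := hcC i
          simp only [map_smul, smul_eq_mul]
          have : 0 ≤ t' - t := by linarith
          positivity
        have heq : a + t • c = (a + t' • c) - (t' - t) • c := by
          rw [sub_smul]; abel
        rw [heq]
        exact UD_sub hD ht'J.2 hkey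
      refine ⟨a + c, S, hsat, ?_, by simpa using hJall 1 zero_le_one, ?_⟩
      · intro i
        have := hcC i
        simpa using this
      · intro c0 hc0
        constructor
        · intro hmem
          set Z : Finset (Fin m) := Finset.univ.filter fun i => ℓ i c0 = 0 with hZ
          have hc0CZ : c0 ∈ CSet ℓ Z := ⟨hc0, fun i hi => (Finset.mem_filter.mp hi).2⟩
          have hc0R : c0 ∈ RSet ℓ Z := by
            refine ⟨fun i hi => (mem_satF ℓ).mp hi c0 hc0CZ, fun i hi => ?_⟩
            have hiZ : i ∉ Z := fun h => hi (subset_satF ℓ Z h)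
            have : ℓ i c0 ≠ 0 := fun h => hiZ (Finset.mem_filter.mpr ⟨Finset.mem_univ i, h⟩)
            exact lt_of_le_of_ne (hc0 i) (Ne.symm this)
          set P : Finset (Fin m) := satF ℓ (S ∩ satF ℓ Z) with hP
          have hsum : c + c0 ∈ RSet ℓ (S ∩ satF ℓ Z) := by
            constructor
            · intro i hi
              have h1 : i ∈ satF ℓ S :=
                satF_anti ℓ (CSet_antitone ℓ (Finset.inter_subset_left)) hi
              have h2 : i ∈ satF ℓ (satF ℓ Z) :=
                satF_anti ℓ (CSet_antitone ℓ (Finset.inter_subset_right)) hi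
              rw [satF_idem] at h2
              rw [map_add, hcR.1 i h1, hc0R.1 i h2, add_zero]
            · intro i hi
              have hi' : i ∉ S ∩ satF ℓ Z := fun h => hi (subset_satF ℓ _ h)
              rw [Finset.mem_inter] at hi'
              push_neg at hi'
              by_cases hiS : i ∈ S
              · have h2 : i ∉ satF ℓ Z := hi' hiS
                have := hc0R.2 i h2
                have := hcC i
                rw [map_add]; linarith
              · have : i ∉ satF ℓ S := by rw [hsat]; exact hiS
                have := hcR.2 i this
                have := hc0 i
                rw [map_add]; linarith
          have hPalive : P ∈ alive ℓ D a := by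
            refine Finset.mem_filter.mpr ⟨Finset.mem_univ _, satF_idem ℓ _, c + c0, ?_, ?_⟩
            · rw [hP, RSet_satF]; exact hsum
            · have : a + (c + c0) = a + c + c0 := by abel
              rw [this]; exact hmem
          have hcardle := hSmin _ hPalive
          have hPsub : P ⊆ S := by
            have h1 : satF ℓ (S ∩ satF ℓ Z) ⊆ satF ℓ S :=
              satF_anti ℓ (CSet_antitone ℓ (Finset.inter_subset_left))
            rw [hsat] at h1
            exact h1
          have hPeq : P = S := Finset.eq_of_subset_of_card_le hPsub hcardle
          have hSsub : S ⊆ satF ℓ Z := by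
            have h1 : satF ℓ (S ∩ satF ℓ Z) ⊆ satF ℓ (satF ℓ Z) :=
              satF_anti ℓ (CSet_antitone ℓ (Finset.inter_subset_right))
            rw [satF_idem] at h1
            rw [← hPeq]
            exact h1
          exact ⟨hc0, fun i hi => hc0R.1 i (hSsub hi)⟩
        · intro hc0CS
          obtain ⟨t, ht, htlt⟩ := exists_tee (Finset.univ \ S)
            (fun i => ℓ i c) (fun i => ℓ i c0)
            (fun i hi => hcR.2 i (by rw [hsat]; exact (Finset.mem_sdiff.mp hi).2))
          have hkey : ∀ i, 0 ≤ ℓ i (t • c - c0) := by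
            intro i
            by_cases hi : i ∈ S
            · have h1 : ℓ i c = 0 := hcR.1 i (by rw [hsat]; exact hi)
              have h2 : ℓ i c0 = 0 := hc0CS.2 i hi
              simp [map_sub, map_smul, h1, h2]
            · have := htlt i (Finset.mem_sdiff.mpr ⟨Finset.mem_univ i, hi⟩)
              simp only [map_sub, map_smul, smul_eq_mul]
              linarith
          have h1 := hJall (1 + t) (by linarith)
          have heq : a + c + c0 = (a + (1 + t) • c) - (t • c - c0) := by
            rw [add_smul, one_smul]; abel
          rw [heq]
          exact UD_sub hD h1 hkey

-- Part C : good points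
variable (ℓ)

noncomputable def badSet (D : Set (Fin n → ℝ)) (Sτ : Finset (Fin m)) (x : Fin n → ℝ) :
    Finset (Finset (Fin m)) :=
  Finset.univ.filter fun S => satF ℓ S = S ∧ S ⊆ Sτ ∧ x ∈ UD ℓ D S ∧
    ∃ t ∈ CSet ℓ Sτ, x + t ∉ UD ℓ D S

lemma partC_aux (hD : IsDownset {x : Fin n → ℝ | ∀ i, 0 ≤ ℓ i x} D) (Sτ : Finset (Fin m)) :
    ∀ k : ℕ, ∀ x : Fin n → ℝ, (badSet ℓ D Sτ x).card ≤ k →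
      ∃ x', x' - x ∈ CSet ℓ Sτ ∧ badSet ℓ D Sτ x' = ∅ := by
  intro k
  induction k with
  | zero =>
    intro x hcard
    refine ⟨x, by simpa using CSet_zero ℓ Sτ, Finset.card_eq_zero.mp (by omega)⟩
  | succ k ih =>
    intro x hcard
    by_cases hbad : badSet ℓ D Sτ x = ∅
    · exact ⟨x, by simpa using CSet_zero ℓ Sτ, hbad⟩
    · obtain ⟨S0, hS0⟩ := Finset.nonempty_iff_ne_empty.mpr hbad
      obtain ⟨-, hsat0, hsub0, hxUD0, t0, ht0CS, ht0not⟩ := Finset.mem_filter.mp hS0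
      set x1 : Fin n → ℝ := x + t0 with hx1
      have hsub : badSet ℓ D Sτ x1 ⊆ (badSet ℓ D Sτ x).erase S0 := by
        intro T hT
        obtain ⟨-, hsatT, hsubT, hx1T, t, htCS, htnot⟩ := Finset.mem_filter.mp hT
        refine Finset.mem_erase.mpr ⟨?_, ?_⟩
        · rintro rfl
          exact ht0not hx1T
        · refine Finset.mem_filter.mpr ⟨Finset.mem_univ _, hsatT, hsubT, ?_, t0 + t, ?_, ?_⟩
          · have heq : x = x1 - t0 := by rw [hx1]; abel
            rw [heq]
            exact UD_sub hD hx1T ht0CS.1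
          · exact CSet_add ℓ ht0CS htCS
          · have heq : x + (t0 + t) = x1 + t := by rw [hx1]; abel
            rw [heq]
            exact htnot
      have hcard1 : (badSet ℓ D Sτ x1).card ≤ k := by
        have h1 := Finset.card_le_card hsub
        have h2 := Finset.card_erase_of_mem hS0
        have h3 := Finset.card_pos.mpr ⟨S0, hS0⟩
        omega
      obtain ⟨x', hx'1, hx'bad⟩ := ih x1 hcard1
      refine ⟨x', ?_, hx'bad⟩
      have heq : x' - x = (x' - x1) + t0 := by rw [hx1]; abel
      rw [heq]
      exact CSet_add ℓ hx'1 ht0CS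

end CogenProof

open CogenProof

/-- Every element of a downset precedes a cogenerator along some face `τ`
with some nadir `σ ⊇ τ`. -/
theorem exists_cogenerator_above {n : ℕ} (C D : Set (Fin n → ℝ))
    (hC : IsPolyCone C) (hpointed : C ∩ (-C) = {0}) (hspan : C - C = Set.univ)
    (hD : IsDownset C D) (b : Fin n → ℝ) (hb : b ∈ D) :
    ∃ (τ σ : Set (Fin n → ℝ)) (a : Fin n → ℝ), IsConeFace τ C ∧ IsConeFace σ C ∧
      τ ⊆ σ ∧ a - b ∈ C ∧ IsCogen C D τ σ a := by
  classical
  obtain ⟨m, ℓ, rfl⟩ := hC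
  -- b lies in the closure downset
  have hbUD : b ∈ UD ℓ D (∅ : Finset (Fin m)) := fun s hs =>
    D_sub hD hb (RSet_subset_CSet ℓ ∅ hs).1
  obtain ⟨a1, Sτ, hsatτ, ha1b, ha1UD, ha1iff⟩ :=
    partB_aux hD hspan (alive ℓ D b).card b hbUD le_rfl
  -- good point above a1
  obtain ⟨a, haa1, hbadempty⟩ := partC_aux ℓ hD Sτ (badSet ℓ D Sτ a1).card a1 le_rfl
  have haUD0 : a ∈ UD ℓ D (∅ : Finset (Fin m)) := by
    have heq : a = a1 + (a - a1) := by abel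
    rw [heq]
    exact (ha1iff _ haa1.1).mpr haa1
  -- choose the nadir
  set P : Finset (Finset (Fin m)) :=
    Finset.univ.filter (fun S => satF ℓ S = S ∧ S ⊆ Sτ ∧ a ∈ UD ℓ D S) with hP
  have hPne : P.Nonempty := by
    refine ⟨satF ℓ ∅, Finset.mem_filter.mpr ⟨Finset.mem_univ _, satF_idem ℓ _, ?_, ?_⟩⟩
    · have h1 : satF ℓ ∅ ⊆ satF ℓ Sτ := satF_anti ℓ (CSet_antitone ℓ (Finset.empty_subset Sτ))
      rw [hsatτ] at h1
      exact h1
    · rw [UD_satF]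
      exact haUD0
  obtain ⟨Sσ, hSσP, hSσmax⟩ := Finset.exists_max_image P Finset.card hPne
  obtain ⟨-, hsatσ, hsubσ, haUDσ⟩ := Finset.mem_filter.mp hSσP
  have hgood : ∀ t ∈ CSet ℓ Sτ, a + t ∈ UD ℓ D Sσ := by
    intro t ht
    by_contra hcon
    have : Sσ ∈ badSet ℓ D Sτ a :=
      Finset.mem_filter.mpr ⟨Finset.mem_univ _, hsatσ, hsubσ, haUDσ, t, ht, hcon⟩
    rw [hbadempty] at this
    exact absurd this (Finset.notMem_empty _)
  have hupSet : upSet D (CSet ℓ Sσ) = UD ℓ D Sσ := by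
    unfold upSet UD
    rw [intrinsicInterior_CSet]
  refine ⟨CSet ℓ Sτ, CSet ℓ Sσ, a, isConeFace_CSet ℓ Sτ, isConeFace_CSet ℓ Sσ,
    CSet_antitone ℓ hsubσ, ?_, ?_, ?_⟩
  · -- a - b ∈ C
    intro i
    have h1 := ha1b i
    have h2 := haa1.1 i
    have heq : a - b = (a - a1) + (a1 - b) := by abel
    rw [heq, map_add]
    linarith
  · -- ({a} + C) ∩ upSet = {a} + τ
    rw [hupSet]
    ext x
    simp only [Set.mem_inter_iff, Set.singleton_add, Set.mem_image]
    constructor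
    · rintro ⟨⟨c, hc, rfl⟩, hxUD⟩
      have hxUD0 : a + c ∈ UD ℓ D (∅ : Finset (Fin m)) := by
        refine UD_mono hD ?_ hxUD
        exact satF_anti ℓ (CSet_antitone ℓ (Finset.empty_subset Sσ))
      have hnn : ∀ i, 0 ≤ ℓ i ((a - a1) + c) := by
        intro i
        have := haa1.1 i
        have := hc i
        rw [map_add]; linarith
      have hmem : (a - a1) + c ∈ CSet ℓ Sτ := by
        refine (ha1iff _ hnn).mp ?_
        have heq : a1 + ((a - a1) + c) = a + c := by abel
        rw [heq]
        exact hxUD0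
      have hcCS : c ∈ CSet ℓ Sτ := by
        refine ⟨hc, fun i hi => ?_⟩
        have h1 := hmem.2 i hi
        have h2 := haa1.2 i hi
        rw [map_add] at h1
        linarith
      exact ⟨c, hcCS, rfl⟩
    · rintro ⟨t, htCS, rfl⟩
      exact ⟨⟨t, htCS.1, rfl⟩, hgood t htCS⟩
  · -- minimality of the nadir
    intro σ'' hface hτsub hlt hall
    have hcl : σ'' = CSet ℓ (satOf ℓ σ'') := face_eq_CSet ℓ hface
    set S'' : Finset (Fin m) := satOf ℓ σ'' with hS''
    have hsat'' : satF ℓ S'' = S'' := by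
      ext i
      rw [mem_satF, hS'', mem_satOf, ← hcl]
    have haUD'' : a ∈ UD ℓ D S'' := by
      intro s hs
      refine hall s ?_
      rw [hcl, intrinsicInterior_CSet]
      exact hs
    have hsub'' : S'' ⊆ Sτ := by
      have h1 : satF ℓ S'' ⊆ satF ℓ Sτ := by
        refine satF_anti ℓ ?_
        rw [← hcl]
        exact hτsub
      rw [hsat'', hsatτ] at h1
      exact h1
    have hmem'' : S'' ∈ P :=
      Finset.mem_filter.mpr ⟨Finset.mem_univ _, hsat'', hsub'', haUD''⟩
    have hcard := hSσmax _ hmem''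
    have hσsub : Sσ ⊆ S'' := by
      have h1 : satF ℓ Sσ ⊆ satF ℓ S'' := by
        refine satF_anti ℓ ?_
        rw [← hcl]
        exact hlt.subset
      rw [hsat'', hsatσ] at h1
      exact h1
    have : Sσ = S'' := Finset.eq_of_subset_of_card_le hσsub hcard
    exact hlt.ne (by rw [hcl, ← this])
end
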